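/- arXiv:1601.00837 — 6 statements merged into one kernel-verified Lean document; each statement's English description precedes it below -/
import Mathlib

section
/- Let γ ≥ 1 and 0 < v₊ < 1, and set a = v₊^γ(1−v₊)/(1−v₊^γ). Then there exists a differentiable, strictly decreasing function v̄ : ℝ → ℝ satisfying v̄′(x) = v̄(x)(v̄(x) − 1 + a(v̄(x)^{−γ} − 1)) for all x ∈ ℝ, with v₊ < v̄(x) < 1 for all x, lim_{x→−∞} v̄(x) = 1, and lim_{x→+∞} v̄(x) = v₊. -/
open Filter Topology

/-- Existence of the viscous shock profile: for `γ ≥ 1` and `0 < v₊ < 1`, with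
`a = v₊^γ(1−v₊)/(1−v₊^γ)`, there is a differentiable strictly decreasing solution of the
profile ODE `v' = v(v − 1 + a(v^{−γ} − 1))` lying in `(v₊, 1)` and connecting `1` at `−∞`
to `v₊` at `+∞`. -/
theorem profile_existence
    (γ vp : ℝ) (hγ : 1 ≤ γ) (hvp0 : 0 < vp) (hvp1 : vp < 1)
    (a : ℝ) (ha : a = vp ^ γ * (1 - vp) / (1 - vp ^ γ)) :
    ∃ vbar : ℝ → ℝ,
      (∀ x : ℝ, HasDerivAt vbar (vbar x * (vbar x - 1 + a * ((vbar x) ^ (-γ) - 1))) x) ∧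
      StrictAnti vbar ∧
      (∀ x : ℝ, vp < vbar x ∧ vbar x < 1) ∧
      Tendsto vbar atBot (𝓝 1) ∧
      Tendsto vbar atTop (𝓝 vp) := by
  have hγ0 : (0:ℝ) < γ := lt_of_lt_of_le one_pos hγ
  have hvpγ1 : vp ^ γ < 1 := Real.rpow_lt_one hvp0.le hvp1 hγ0
  have hvpγ0 : 0 < vp ^ γ := Real.rpow_pos_of_pos hvp0 γ
  have ha0 : 0 < a := by
    rw [ha]; exact div_pos (mul_pos hvpγ0 (by linarith)) (by linarith)
  set g : ℝ → ℝ := fun v => v - 1 + a * (v ^ (-γ) - 1) with hg_def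
  set f : ℝ → ℝ := fun v => v * g v with hf_def
  have hgvp : g vp = 0 := by
    have h1 : vp ^ (-γ) = (vp ^ γ)⁻¹ := Real.rpow_neg hvp0.le γ
    have key : a * ((vp ^ γ)⁻¹ - 1) = 1 - vp := by
      rw [ha]
      field_simp [hvpγ0.ne', sub_ne_zero.mpr hvpγ1.ne']
    simp only [hg_def, h1]
    rw [key]; ring
  have hg1 : g 1 = 0 := by simp [hg_def]
  have hg_deriv : ∀ v : ℝ, 0 < v → HasDerivAt g (1 - a * γ * v ^ (-γ - 1)) v := by
    intro v hv
    have h1 : HasDerivAt (fun x : ℝ => x ^ (-γ)) ((-γ) * v ^ (-γ - 1)) v :=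
      Real.hasDerivAt_rpow_const (Or.inl hv.ne')
    have h2 : HasDerivAt g (1 + a * (-γ * v ^ (-γ - 1))) v := ((hasDerivAt_id v).sub_const 1).add (((h1.sub_const 1)).const_mul a)
    convert h2 using 1
    ring
  have hf_deriv : ∀ v : ℝ, 0 < v →
      HasDerivAt f (g v + v * (1 - a * γ * v ^ (-γ - 1))) v := by
    intro v hv
    have : HasDerivAt f (1 * g v + id v * (1 - a * γ * v ^ (-γ - 1))) v := (hasDerivAt_id v).mul (hg_deriv v hv)
    convert this using 1
    simp only [id_eq]
    ring
  have hg_cont : ∀ v : ℝ, 0 < v → ContinuousAt g v := fun v hv => (hg_deriv v hv).continuousAt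
  have hf_cont : ∀ v : ℝ, 0 < v → ContinuousAt f v := fun v hv => (hf_deriv v hv).continuousAt
  -- strict convexity of g on Ioi 0
  have hconv : StrictConvexOn ℝ (Set.Ioi (0:ℝ)) g := by
    apply strictConvexOn_of_deriv2_pos (convex_Ioi 0)
    · exact fun v hv => (hg_cont v hv).continuousWithinAt
    · intro v hv
      rw [interior_Ioi] at hv
      have hdg : deriv g =ᶠ[𝓝 v] fun x => 1 - a * γ * x ^ (-γ - 1) := by
        filter_upwards [Ioi_mem_nhds hv] with x hx
        exact (hg_deriv x hx).deriv
      have h1 : HasDerivAt (fun x : ℝ => x ^ (-γ - 1)) ((-γ - 1) * v ^ (-γ - 1 - 1)) v :=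
        Real.hasDerivAt_rpow_const (Or.inl hv.ne')
      have h2 : HasDerivAt (fun x : ℝ => 1 - a * γ * x ^ (-γ - 1))
          (a * γ * (γ + 1) * v ^ (-γ - 1 - 1)) v := by
        have : HasDerivAt (fun x : ℝ => 1 - a * γ * x ^ (-γ - 1)) (-(a * γ * ((-γ - 1) * v ^ (-γ - 1 - 1)))) v := (h1.const_mul (a * γ)).const_sub 1
        convert this using 1
        ring
      have h3 : (deriv^[2] g) v = deriv (deriv g) v := by
        simp [Function.iterate_succ_apply']
      rw [h3, hdg.deriv_eq, h2.deriv]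
      have : (0:ℝ) < v ^ (-γ - 1 - 1) := Real.rpow_pos_of_pos hv _
      positivity
  have hg_neg : ∀ v ∈ Set.Ioo vp 1, g v < 0 := by
    intro v hv
    obtain ⟨h1, h2⟩ := hv
    have ht : (0:ℝ) < (1 - v) / (1 - vp) := by
      apply div_pos <;> linarith
    have hs : (0:ℝ) < (v - vp) / (1 - vp) := by
      apply div_pos <;> linarith
    have hne : (1:ℝ) - vp ≠ 0 := by linarith
    have hts : (1 - v) / (1 - vp) + (v - vp) / (1 - vp) = 1 := by
      rw [← add_div, show (1 - v) + (v - vp) = 1 - vp by ring, div_self hne]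
    have key := hconv.2 (Set.mem_Ioi.2 hvp0) (Set.mem_Ioi.2 one_pos) hvp1.ne ht hs hts
    have hv' : ((1 - v) / (1 - vp)) • vp + ((v - vp) / (1 - vp)) • (1:ℝ) = v := by
      simp only [smul_eq_mul]
      field_simp
      ring
    rw [hv', hgvp, hg1] at key
    simpa using key
  have hf_neg : ∀ v ∈ Set.Ioo vp 1, f v < 0 := fun v hv =>
    mul_neg_of_pos_of_neg (hvp0.trans hv.1) (hg_neg v hv)
  -- bounds on -f
  have hbound1 : ∀ v ∈ Set.Ioo vp 1, -f v ≤ a * γ * vp ^ (-γ - 1) * (v - vp) := by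
    intro v hv
    obtain ⟨h1, h2⟩ := hv
    have hv0 : 0 < v := hvp0.trans h1
    obtain ⟨ξ, hξ, hslope⟩ := exists_hasDerivAt_eq_slope g (fun x => 1 - a * γ * x ^ (-γ - 1)) h1
      (fun x hx => (hg_cont x (lt_of_lt_of_le hvp0 hx.1)).continuousWithinAt)
      (fun x hx => hg_deriv x (hvp0.trans hx.1))
    rw [hgvp, sub_zero] at hslope
    have hgv : g v = (1 - a * γ * ξ ^ (-γ - 1)) * (v - vp) := by
      rw [hslope, div_mul_cancel₀ _ (by linarith : v - vp ≠ 0)]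
    have hξb : ξ ^ (-γ - 1) ≤ vp ^ (-γ - 1) :=
      Real.rpow_le_rpow_of_nonpos hvp0 hξ.1.le (by linarith)
    have haux : a * γ * ξ ^ (-γ - 1) ≤ a * γ * vp ^ (-γ - 1) :=
      mul_le_mul_of_nonneg_left hξb (by positivity)
    have hfg : -f v ≤ -g v := by
      have hgneg : g v < 0 := hg_neg v ⟨h1, h2⟩
      have : v * (-g v) ≤ 1 * (-g v) := by
        apply mul_le_mul_of_nonneg_right h2.le (by linarith)
      simp only [hf_def]
      nlinarith
    calc -f v ≤ -g v := hfg
      _ = (a * γ * ξ ^ (-γ - 1) - 1) * (v - vp) := by rw [hgv]; ring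
      _ ≤ a * γ * vp ^ (-γ - 1) * (v - vp) := by nlinarith
  have hbound2 : ∀ v ∈ Set.Ioo vp 1, -f v ≤ 1 - v := by
    intro v hv
    obtain ⟨h1, h2⟩ := hv
    have hv0 : 0 < v := hvp0.trans h1
    have hr : 1 ≤ v ^ (-γ) :=
      Real.one_le_rpow_of_pos_of_le_one_of_nonpos hv0 h2.le (by linarith)
    have : f v = v * (v - 1) + a * v * (v ^ (-γ) - 1) := by
      simp only [hf_def, hg_def]; ring
    nlinarith [mul_pos ha0 hv0]
  -- the integrated variable
  set v0 : ℝ := (vp + 1) / 2 with hv0_def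
  have hv0I : v0 ∈ Set.Ioo vp 1 := ⟨by simp only [hv0_def]; linarith, by simp only [hv0_def]; linarith⟩
  have hsub : ∀ {u v : ℝ}, u ∈ Set.Ioo vp 1 → v ∈ Set.Ioo vp 1 →
      Set.uIcc u v ⊆ Set.Ioo vp 1 := fun hu hv => Set.OrdConnected.uIcc_subset Set.ordConnected_Ioo hu hv
  have hh_contOn : ContinuousOn (fun t => (f t)⁻¹) (Set.Ioo vp 1) := fun t ht =>
    ((hf_cont t (hvp0.trans ht.1)).continuousWithinAt).inv₀ (hf_neg t ht).ne
  have hG_int : ∀ u v : ℝ, u ∈ Set.Ioo vp 1 → v ∈ Set.Ioo vp 1 →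
      IntervalIntegrable (fun t => (f t)⁻¹) MeasureTheory.volume u v := fun u v hu hv =>
    (hh_contOn.mono (hsub hu hv)).intervalIntegrable
  set G : ℝ → ℝ := fun v => ∫ t in v0..v, (f t)⁻¹ with hG_def
  have hG_deriv : ∀ v ∈ Set.Ioo vp 1, HasDerivAt G ((f v)⁻¹) v := by
    intro v hv
    exact intervalIntegral.integral_hasDerivAt_right (hG_int v0 v hv0I hv)
      (hh_contOn.stronglyMeasurableAtFilter isOpen_Ioo v hv)
      (hh_contOn.continuousAt (isOpen_Ioo.mem_nhds hv))
  have hG_contOn : ContinuousOn G (Set.Ioo vp 1) := fun v hv =>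
    ((hG_deriv v hv).continuousAt).continuousWithinAt
  have hG_anti : StrictAntiOn G (Set.Ioo vp 1) := by
    apply strictAntiOn_of_deriv_neg (convex_Ioo _ _) hG_contOn
    intro v hv
    rw [interior_Ioo] at hv
    rw [(hG_deriv v hv).deriv]
    exact inv_lt_zero.2 (hf_neg v hv)
  -- divergence of G near vp
  set L : ℝ := a * γ * vp ^ (-γ - 1) with hL_def
  have hL0 : 0 < L := by
    have h : (0:ℝ) < vp ^ (-γ - 1) := Real.rpow_pos_of_pos hvp0 _
    positivity
  have hGtop : Tendsto G (𝓝[>] vp) atTop := by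
    have key : ∀ u ∈ Set.Ioo vp v0, L⁻¹ * (Real.log (v0 - vp) - Real.log (u - vp)) ≤ G u := by
      intro u hu
      have huI : u ∈ Set.Ioo vp 1 := ⟨hu.1, hu.2.trans hv0I.2⟩
      have huv0 : u ≤ v0 := hu.2.le
      have hcont2 : ContinuousOn (fun t => -(L * (t - vp))⁻¹) (Set.Icc u v0) := by
        apply ContinuousOn.neg
        apply ContinuousOn.inv₀
        · fun_prop
        · intro t ht
          have h1 : vp < t := lt_of_lt_of_le hu.1 ht.1
          have : 0 < L * (t - vp) := mul_pos hL0 (by linarith)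
          exact this.ne'
      have hint2 : IntervalIntegrable (fun t => -(L * (t - vp))⁻¹) MeasureTheory.volume u v0 := by
        apply ContinuousOn.intervalIntegrable
        rwa [Set.uIcc_of_le huv0]
      have hmono : ∫ t in u..v0, (f t)⁻¹ ≤ ∫ t in u..v0, -(L * (t - vp))⁻¹ := by
        apply intervalIntegral.integral_mono_on huv0 (hG_int u v0 huI hv0I) hint2
        intro t ht
        have htI : t ∈ Set.Ioo vp 1 := ⟨lt_of_lt_of_le hu.1 ht.1, lt_of_le_of_lt ht.2 hv0I.2⟩
        have hf1 : 0 < -f t := neg_pos.2 (hf_neg t htI)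
        have hb : -f t ≤ L * (t - vp) := hbound1 t htI
        have h2 := inv_anti₀ hf1 hb
        rw [inv_neg] at h2
        linarith
      have hcomp : ∫ t in u..v0, -(L * (t - vp))⁻¹
          = -(L⁻¹ * (Real.log (v0 - vp) - Real.log (u - vp))) := by
        rw [intervalIntegral.integral_neg]
        congr 1
        have hrw : (fun t : ℝ => (L * (t - vp))⁻¹) = fun t : ℝ => L⁻¹ * (t - vp)⁻¹ := by
          funext t; rw [mul_inv]
        rw [hrw, intervalIntegral.integral_const_mul,
          intervalIntegral.integral_comp_sub_right (fun x => x⁻¹) vp,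
          integral_inv_of_pos (by linarith [hu.1] : (0:ℝ) < u - vp)
            (by linarith [hu.2] : (0:ℝ) < v0 - vp),
          Real.log_div (by linarith [hu.2] : v0 - vp ≠ 0) (by linarith [hu.1] : u - vp ≠ 0)]
      have hGu : G u = -∫ t in u..v0, (f t)⁻¹ := intervalIntegral.integral_symm u v0
      rw [hGu]
      rw [hcomp] at hmono
      linarith
    have h1 : Tendsto (fun u : ℝ => u - vp) (𝓝[>] vp) (𝓝[>] 0) := by
      rw [tendsto_nhdsWithin_iff]
      constructor
      · have h : Tendsto (fun u : ℝ => u - vp) (𝓝 vp) (𝓝 (vp - vp)) :=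
          Filter.tendsto_id.sub_const vp
        simpa using h.mono_left nhdsWithin_le_nhds
      · filter_upwards [self_mem_nhdsWithin] with u hu
        exact sub_pos.2 (Set.mem_Ioi.1 hu)
    have h2 : Tendsto (fun u : ℝ => Real.log (u - vp)) (𝓝[>] vp) atBot :=
      Real.tendsto_log_nhdsGT_zero.comp h1
    have h3 : Tendsto (fun u : ℝ => L⁻¹ * (Real.log (v0 - vp) - Real.log (u - vp)))
        (𝓝[>] vp) atTop := by
      apply Tendsto.const_mul_atTop (inv_pos.2 hL0)
      have h4 : Tendsto (fun u : ℝ => -Real.log (u - vp)) (𝓝[>] vp) atTop :=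
        tendsto_neg_atBot_atTop.comp h2
      have h5 := tendsto_atTop_add_const_left _ (Real.log (v0 - vp)) h4
      simpa [sub_eq_add_neg] using h5
    apply tendsto_atTop_mono' _ _ h3
    filter_upwards [Ioo_mem_nhdsGT_of_mem (Set.mem_Ico.2 ⟨le_refl vp, hv0I.1⟩)] with u hu
    exact key u hu
  -- divergence of G near 1
  have hGbot : Tendsto G (𝓝[<] 1) atBot := by
    have key : ∀ v ∈ Set.Ioo v0 1, G v ≤ Real.log (1 - v) - Real.log (1 - v0) := by
      intro v hv
      have hvI : v ∈ Set.Ioo vp 1 := ⟨hv0I.1.trans hv.1, hv.2⟩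
      have hv0v : v0 ≤ v := hv.1.le
      have hcont2 : ContinuousOn (fun t : ℝ => -(1 - t)⁻¹) (Set.Icc v0 v) := by
        apply ContinuousOn.neg
        apply ContinuousOn.inv₀
        · fun_prop
        · intro t ht
          have h1 : t < 1 := lt_of_le_of_lt ht.2 hv.2
          have : (0:ℝ) < 1 - t := by linarith
          exact this.ne'
      have hint2 : IntervalIntegrable (fun t : ℝ => -(1 - t)⁻¹) MeasureTheory.volume v0 v := by
        apply ContinuousOn.intervalIntegrable
        rwa [Set.uIcc_of_le hv0v]
      have hmono : ∫ t in v0..v, (f t)⁻¹ ≤ ∫ t in v0..v, -(1 - t)⁻¹ := by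
        apply intervalIntegral.integral_mono_on hv0v (hG_int v0 v hv0I hvI) hint2
        intro t ht
        have htI : t ∈ Set.Ioo vp 1 := ⟨lt_of_lt_of_le hv0I.1 ht.1, lt_of_le_of_lt ht.2 hv.2⟩
        have hf1 : 0 < -f t := neg_pos.2 (hf_neg t htI)
        have hb : -f t ≤ 1 - t := hbound2 t htI
        have h2 := inv_anti₀ hf1 hb
        rw [inv_neg] at h2
        linarith
      have hcomp : ∫ t in v0..v, -(1 - t)⁻¹
          = -(Real.log (1 - v0) - Real.log (1 - v)) := by
        rw [intervalIntegral.integral_neg]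
        congr 1
        rw [intervalIntegral.integral_comp_sub_left (fun x : ℝ => x⁻¹) 1,
          integral_inv_of_pos (by linarith [hv.2] : (0:ℝ) < 1 - v)
            (by linarith [hv.1, hv0I.2] : (0:ℝ) < 1 - v0),
          Real.log_div (by linarith [hv0I.2] : 1 - v0 ≠ 0) (by linarith [hv.2] : 1 - v ≠ 0)]
      rw [hcomp] at hmono
      calc G v ≤ -(Real.log (1 - v0) - Real.log (1 - v)) := hmono
        _ = Real.log (1 - v) - Real.log (1 - v0) := by ring
    have h1 : Tendsto (fun v : ℝ => 1 - v) (𝓝[<] 1) (𝓝[>] 0) := by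
      rw [tendsto_nhdsWithin_iff]
      constructor
      · have h : Tendsto (fun v : ℝ => 1 - v) (𝓝 1) (𝓝 (1 - 1)) :=
          Filter.tendsto_id.const_sub 1
        simpa using h.mono_left nhdsWithin_le_nhds
      · filter_upwards [self_mem_nhdsWithin] with v hv
        exact sub_pos.2 (Set.mem_Iio.1 hv)
    have h2 : Tendsto (fun v : ℝ => Real.log (1 - v)) (𝓝[<] 1) atBot :=
      Real.tendsto_log_nhdsGT_zero.comp h1
    have h3 : Tendsto (fun v : ℝ => Real.log (1 - v) - Real.log (1 - v0)) (𝓝[<] 1) atBot :=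
      tendsto_atBot_add_const_right _ _ h2
    apply tendsto_atBot_mono' _ _ h3
    filter_upwards [Ioo_mem_nhdsLT_of_mem (Set.mem_Ioc.2 ⟨hv0I.2, le_refl 1⟩)] with v hv
    exact key v hv
  -- surjectivity of G
  have hsurj : ∀ y : ℝ, ∃ v, v ∈ Set.Ioo vp 1 ∧ G v = y := by
    intro y
    obtain ⟨u, hu1, hu2⟩ : ∃ u, u ∈ Set.Ioo vp v0 ∧ y < G u := by
      have hev : ∀ᶠ u in 𝓝[>] vp, u ∈ Set.Ioo vp v0 :=
        Ioo_mem_nhdsGT_of_mem (Set.mem_Ico.2 ⟨le_refl vp, hv0I.1⟩)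
      exact (hev.and (hGtop.eventually (eventually_gt_atTop y))).exists
    obtain ⟨w, hw1, hw2⟩ : ∃ w, w ∈ Set.Ioo v0 1 ∧ G w < y := by
      have hev : ∀ᶠ w in 𝓝[<] (1:ℝ), w ∈ Set.Ioo v0 1 :=
        Ioo_mem_nhdsLT_of_mem (Set.mem_Ioc.2 ⟨hv0I.2, le_refl 1⟩)
      exact (hev.and (hGbot.eventually (eventually_lt_atBot y))).exists
    have huw : u ≤ w := (hu1.2.trans hw1.1).le
    have hIcc : Set.Icc u w ⊆ Set.Ioo vp 1 := Set.Icc_subset_Ioo hu1.1 hw1.2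
    have hiv := intermediate_value_Icc' huw (hG_contOn.mono hIcc)
    obtain ⟨v, hv, hGv⟩ := hiv (Set.mem_Icc.2 ⟨hw2.le, hu2.le⟩)
    exact ⟨v, hIcc hv, hGv⟩
  choose vbar hmem hGid using hsurj
  have hvbar_anti : StrictAnti vbar := by
    intro x y hxy
    rcases lt_trichotomy (vbar y) (vbar x) with h | h | h
    · exact h
    · exfalso; rw [← hGid x, ← hGid y, h] at hxy; exact lt_irrefl _ hxy
    · exfalso
      have := hG_anti (hmem x) (hmem y) h
      rw [hGid, hGid] at this
      linarith
  have hvbarG : ∀ v ∈ Set.Ioo vp 1, vbar (G v) = v := by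
    intro v hv
    exact hG_anti.injOn (hmem (G v)) hv (hGid (G v))
  have hvbar_cont : ∀ x : ℝ, ContinuousAt vbar x := by
    intro x
    rw [ContinuousAt]
    apply tendsto_order.2
    constructor
    · intro b hb
      have hmax : max b vp < vbar x := max_lt hb (hmem x).1
      obtain ⟨c, hc1, hc2⟩ := exists_between hmax
      have hcI : c ∈ Set.Ioo vp 1 := ⟨(le_max_right b vp).trans_lt hc1, hc2.trans (hmem x).2⟩
      have hx_lt : x < G c := by
        have h := hG_anti hcI (hmem x) hc2
        rwa [hGid] at h
      filter_upwards [Iio_mem_nhds hx_lt] with y hy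
      have h := hvbar_anti hy
      rw [hvbarG c hcI] at h
      exact ((le_max_left b vp).trans_lt hc1).trans h
    · intro b hb
      have hmin : vbar x < min b 1 := lt_min hb (hmem x).2
      obtain ⟨c, hc1, hc2⟩ := exists_between hmin
      have hcI : c ∈ Set.Ioo vp 1 := ⟨(hmem x).1.trans hc1, hc2.trans_le (min_le_right b 1)⟩
      have hx_gt : G c < x := by
        have h := hG_anti (hmem x) hcI hc1
        rwa [hGid] at h
      filter_upwards [Ioi_mem_nhds hx_gt] with y hy
      have h := hvbar_anti hy
      rw [hvbarG c hcI] at h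
      exact h.trans (hc2.trans_le (min_le_left b 1))
  have h_atTop : Tendsto vbar atTop (𝓝 vp) := by
    apply tendsto_order.2
    constructor
    · intro b hb
      filter_upwards with y
      exact hb.trans (hmem y).1
    · intro b hb
      have hmin : vp < min b 1 := lt_min hb hvp1
      obtain ⟨c, hc1, hc2⟩ := exists_between hmin
      have hcI : c ∈ Set.Ioo vp 1 := ⟨hc1, hc2.trans_le (min_le_right b 1)⟩
      filter_upwards [eventually_gt_atTop (G c)] with y hy
      have h := hvbar_anti hy
      rw [hvbarG c hcI] at h
      exact h.trans (hc2.trans_le (min_le_left b 1))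
  have h_atBot : Tendsto vbar atBot (𝓝 1) := by
    apply tendsto_order.2
    constructor
    · intro b hb
      have hmax : max b vp < 1 := max_lt hb hvp1
      obtain ⟨c, hc1, hc2⟩ := exists_between hmax
      have hcI : c ∈ Set.Ioo vp 1 := ⟨(le_max_right b vp).trans_lt hc1, hc2⟩
      filter_upwards [eventually_lt_atBot (G c)] with y hy
      have h := hvbar_anti hy
      rw [hvbarG c hcI] at h
      exact ((le_max_left b vp).trans_lt hc1).trans h
    · intro b hb
      filter_upwards with y
      exact (hmem y).2.trans hb
  have hderiv : ∀ x : ℝ, HasDerivAt vbar (f (vbar x)) x := by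
    intro x
    have h1 := hG_deriv (vbar x) (hmem x)
    have h2 := HasDerivAt.of_local_left_inverse (hvbar_cont x) h1
      (inv_ne_zero (hf_neg _ (hmem x)).ne) (Filter.Eventually.of_forall hGid)
    rwa [inv_inv] at h2
  exact ⟨vbar, hderiv, hvbar_anti, fun x => ⟨(hmem x).1, (hmem x).2⟩, h_atBot, h_atTop⟩
end

section
/- Let γ ≥ 1 and 0 < v₊ < 1, and set a = v₊^γ(1−v₊)/(1−v₊^γ). Define g̃(v) = v − 1 + a(v^{−γ} − 1) for v > 0. Then g̃(v₊) = 0, g̃(1) = 0, and g̃(v) < 0 for every v with v₊ < v < 1. -/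
open Set

lemma rpow_neg_strictConvexOn (γ : ℝ) (hγ : 1 ≤ γ) :
    StrictConvexOn ℝ (Ioi (0:ℝ)) (fun x : ℝ => x ^ (-γ)) := by
  apply strictConvexOn_of_deriv2_pos (convex_Ioi 0)
  · exact ContinuousOn.rpow_const continuousOn_id
      (fun x hx => Or.inl (ne_of_gt hx))
  · intro x hx
    rw [interior_Ioi] at hx
    have hx0 : (0:ℝ) < x := hx
    have hxne : x ≠ 0 := ne_of_gt hx0
    have hev : (deriv fun y : ℝ => y ^ (-γ)) =ᶠ[nhds x]
        (fun y : ℝ => -γ * y ^ (-γ - 1)) := by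
      filter_upwards [eventually_ne_nhds hxne] with y hy
      exact Real.deriv_rpow_const y (-γ)
    have h2 : deriv^[2] (fun y : ℝ => y ^ (-γ)) x
        = deriv (deriv fun y : ℝ => y ^ (-γ)) x := rfl
    rw [h2, hev.deriv_eq]
    have hd : HasDerivAt (fun y : ℝ => -γ * y ^ (-γ - 1))
        (-γ * ((-γ - 1) * x ^ (-γ - 1 - 1))) x :=
      (Real.hasDerivAt_rpow_const (Or.inl hxne)).const_mul (-γ)
    rw [hd.deriv]
    have hpow : (0:ℝ) < x ^ (-γ - 1 - 1) := Real.rpow_pos_of_pos hx0 _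
    have hγ0 : (0:ℝ) < γ := by linarith
    nlinarith [mul_pos (mul_pos hγ0 (show (0:ℝ) < γ + 1 by linarith)) hpow]

/-- The nonlinearity `g̃(v) = v − 1 + a(v^{−γ} − 1)` of the profile ODE, with
`a = v₊^γ(1−v₊)/(1−v₊^γ)`, vanishes at `v = v₊` and `v = 1` and is strictly negative on
the open interval `(v₊, 1)`. -/
theorem profile_nonlinearity_sign
    (γ vp : ℝ) (hγ : 1 ≤ γ) (hvp0 : 0 < vp) (hvp1 : vp < 1)
    (a : ℝ) (ha : a = vp ^ γ * (1 - vp) / (1 - vp ^ γ))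
    (g : ℝ → ℝ) (hg : ∀ v : ℝ, 0 < v → g v = v - 1 + a * (v ^ (-γ) - 1)) :
    g vp = 0 ∧ g 1 = 0 ∧ ∀ v : ℝ, vp < v → v < 1 → g v < 0 := by
  have hγ0 : 0 < γ := lt_of_lt_of_le one_pos hγ
  have hvpγ : (0:ℝ) < vp ^ γ := Real.rpow_pos_of_pos hvp0 γ
  have hvpγ1 : vp ^ γ < 1 := Real.rpow_lt_one hvp0.le hvp1 hγ0
  have hinv : vp ^ (-γ) = (vp ^ γ)⁻¹ := Real.rpow_neg hvp0.le γ
  have hden : 1 - vp ^ γ ≠ 0 := by linarith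
  have hgvp : g vp = 0 := by
    rw [hg vp hvp0, ha, hinv]
    field_simp
    ring
  have hg1 : g 1 = 0 := by
    rw [hg 1 one_pos, Real.one_rpow]
    ring
  refine ⟨hgvp, hg1, ?_⟩
  intro v hv1 hv2
  have hv0 : 0 < v := lt_trans hvp0 hv1
  have ha0 : 0 < a := by
    rw [ha]
    exact div_pos (mul_pos hvpγ (by linarith)) (by linarith)
  -- convexity argument
  set t : ℝ := (1 - v) / (1 - vp) with ht
  have hvp1' : (0:ℝ) < 1 - vp := by linarith
  have ht0 : 0 < t := by apply div_pos <;> linarith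
  have ht1 : t < 1 := by rw [div_lt_one hvp1']; linarith
  have hcomb : t • vp + (1 - t) • (1:ℝ) = v := by
    field_simp [ht]
    have h' : t * (1 - vp) = 1 - v := by
      rw [ht]; exact div_mul_cancel₀ _ hvp1'.ne'
    simp only [smul_eq_mul]
    linarith
  have hkey := (rpow_neg_strictConvexOn γ hγ).2
    (mem_Ioi.mpr hvp0) (mem_Ioi.mpr one_pos) (ne_of_lt hvp1)
    ht0 (show (0:ℝ) < 1 - t by linarith) (by ring)
  rw [hcomb] at hkey
  simp only [smul_eq_mul, Real.one_rpow] at hkey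
  -- hkey : v ^ (-γ) < t * vp ^ (-γ) + (1 - t) * 1
  have hgvp' : vp - 1 + a * (vp ^ (-γ) - 1) = 0 := by
    rw [← hg vp hvp0]; exact hgvp
  have hvlin : v - 1 = t * (vp - 1) := by
    rw [ht]; field_simp; ring
  rw [hg v hv0]
  nlinarith [mul_lt_mul_of_pos_left hkey ha0, mul_pos ht0 ha0]
end

section
/- Let γ = 5/3 and 0 < v₊ < 1, and set a = v₊^γ(1−v₊)/(1−v₊^γ), h(v) = −v^{γ+1} + a(γ−1) + (a+1)v^γ, f(v) = v − v^{−γ}h(v). For λ ∈ ℂ with Re λ > 0, let A₋(λ) be the 3×3 complex matrix with rows (0, λ, 1), (0, 0, 1), (λ, λ, f(1) − λ), and A₊(λ) the 3×3 matrix with rows (0, λ, 1), (0, 0, 1), (λv₊, λv₊, f(v₊) − λ). Then no eigenvalue of A₋(λ) or of A₊(λ) is purely imaginary; counted with algebraic multiplicity, A₋(λ) has exactly one eigenvalue with positive real part (and two with negative real part), and A₊(λ) has exactly two eigenvalues with negative real part (and one with positive real part). -/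
open Polynomial
open scoped Classical

noncomputable def Pc (v f : ℝ) (l : ℂ) : Polynomial ℂ :=
  X^3 + C (l - (f:ℂ)) * X^2 - C (2*(v:ℂ)*l) * X - C ((v:ℂ)*l^2)

lemma Pc_monic (v f : ℝ) (l : ℂ) : (Pc v f l).Monic := by
  unfold Pc; monicity!

lemma Pc_natDegree (v f : ℝ) (l : ℂ) : (Pc v f l).natDegree = 3 := by
  unfold Pc; compute_degree!

lemma Pc_ne_zero (v f : ℝ) (l : ℂ) : Pc v f l ≠ 0 := (Pc_monic v f l).ne_zero

lemma Pc_eval (v f : ℝ) (l μ : ℂ) :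
    (Pc v f l).eval μ = μ^3 + (l - (f:ℂ))*μ^2 - 2*(v:ℂ)*l*μ - (v:ℂ)*l^2 := by
  simp [Pc]

lemma Pc_roots_card (v f : ℝ) (l : ℂ) : Multiset.card (Pc v f l).roots = 3 := by
  rw [← Pc_natDegree v f l]
  exact (Polynomial.splits_iff_card_roots.mp (IsAlgClosed.splits _))

lemma Pc_mem_roots {v f : ℝ} {l μ : ℂ} :
    μ ∈ (Pc v f l).roots ↔ (Pc v f l).eval μ = 0 := by
  rw [Polynomial.mem_roots (Pc_ne_zero v f l)]
  simp [Polynomial.IsRoot]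

lemma no_imag_root {v f : ℝ} (hv : 0 < v) (hd : f < v) {l μ : ℂ} (hl : 0 < l.re)
    (heval : μ^3 + (l - (f:ℂ))*μ^2 - 2*(v:ℂ)*l*μ - (v:ℂ)*l^2 = 0) : μ.re ≠ 0 := by
  intro hre
  have h1 := congrArg Complex.re heval
  have h2 := congrArg Complex.im heval
  simp only [Complex.add_re, Complex.sub_re, Complex.mul_re, Complex.mul_im,
    Complex.add_im, Complex.sub_im, Complex.ofReal_re, Complex.ofReal_im,
    Complex.zero_re, Complex.zero_im, pow_succ, pow_zero, one_mul,
    Complex.re_ofNat, Complex.im_ofNat] at h1 h2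
  rw [hre] at h1 h2
  have hfac : (μ.im + l.im) * (μ.im^2 + 2*v*l.re) = 0 := by linear_combination -h2
  have hpos : 0 < μ.im^2 + 2*v*l.re := by positivity
  have hyξ : l.im = -μ.im := by
    rcases mul_eq_zero.mp hfac with h | h
    · linarith
    · linarith
  rw [hyξ] at h1
  nlinarith [sq_nonneg μ.im, mul_pos hv (mul_pos hl hl), h1]

-- quadratic factorization into linear factors
lemma quad_factor {B Cc u : ℂ} (hu : u^2 = B^2 - 4*Cc) :
    X^2 + C B * X + C Cc =
      (X - C ((-B + u)/2)) * (X - C ((-B - u)/2)) := by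
  have h1 : ((-B + u)/2) + ((-B - u)/2) = -B := by ring
  have h2 : ((-B + u)/2) * ((-B - u)/2) = Cc := by linear_combination (-1/4 : ℂ) * hu
  calc X^2 + C B * X + C Cc
      = X^2 - C (((-B + u)/2) + ((-B - u)/2)) * X + C (((-B + u)/2) * ((-B - u)/2)) := by
        rw [h1, h2]; simp only [map_neg]; ring
    _ = (X - C ((-B + u)/2)) * (X - C ((-B - u)/2)) := by
        simp only [map_add, map_mul]; ring

lemma quad_roots {B Cc u : ℂ} (hu : u^2 = B^2 - 4*Cc) :
    (X^2 + C B * X + C Cc).roots = {(-B + u)/2, (-B - u)/2} := by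
  rw [quad_factor hu, Polynomial.roots_mul (mul_ne_zero (X_sub_C_ne_zero _) (X_sub_C_ne_zero _)),
    Polynomial.roots_X_sub_C, Polynomial.roots_X_sub_C]
  rfl

-- cubic factorization given a root
lemma cubic_factor {A2 A1 A0 a : ℂ}
    (ha : a^3 + A2*a^2 + A1*a + A0 = 0) :
    X^3 + C A2 * X^2 + C A1 * X + C A0 =
      (X - C a) * (X^2 + C (A2 + a) * X + C (A1 + A2*a + a^2)) := by
  have : A0 = -(a^3 + A2*a^2 + A1*a) := by linear_combination ha
  subst this
  simp only [map_add, map_mul, map_neg, map_pow]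
  ring

lemma quad_root_neg_re {B Cc : ℝ} (hB : 0 < B) (hC : 0 < Cc) {z : ℂ}
    (hz : z^2 + (B:ℂ)*z + (Cc:ℂ) = 0) : z.re < 0 := by
  have h1 := congrArg Complex.re hz
  have h2 := congrArg Complex.im hz
  simp only [Complex.add_re, Complex.add_im, Complex.mul_re, Complex.mul_im,
    Complex.ofReal_re, Complex.ofReal_im, pow_succ, pow_zero, one_mul,
    Complex.zero_re, Complex.zero_im, Complex.one_re, Complex.one_im] at h1 h2
  -- h2 : 2 z.re z.im + B z.im = 0
  have hfac : z.im * (2*z.re + B) = 0 := by linear_combination h2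
  rcases mul_eq_zero.mp hfac with h | h
  · -- z real
    rw [h] at h1
    by_contra hge
    push_neg at hge
    nlinarith
  · linarith

lemma re_sign_iff {x y : ℂ} (h : ‖x - y‖ < |y.re|) : (0 < x.re ↔ 0 < y.re) := by
  have h1 : |x.re - y.re| ≤ ‖x - y‖ := by
    have := Complex.abs_re_le_norm (x - y)
    simpa [Complex.sub_re] using this
  rw [abs_sub_le_iff] at h1
  rcases lt_trichotomy y.re 0 with hy | hy | hy
  · rw [abs_of_neg hy] at h
    constructor <;> intro <;> linarith [h1.1, h1.2]
  · rw [hy, abs_zero] at h; exact absurd h (norm_nonneg _).not_gt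
  · rw [abs_of_pos hy] at h
    constructor <;> intro <;> linarith [h1.1, h1.2]

lemma card_filter_triple (p : ℂ → Prop) [DecidablePred p] (x y z : ℂ) :
    Multiset.card (Multiset.filter p {x, y, z}) =
      (if p x then 1 else 0) + ((if p y then 1 else 0) + (if p z then 1 else 0)) := by
  show Multiset.card (Multiset.filter p (x ::ₘ y ::ₘ {z})) = _
  simp only [Multiset.filter_cons, Multiset.filter_singleton, Multiset.card_add,
    apply_ite Multiset.card, Multiset.card_singleton, Multiset.empty_eq_zero, Multiset.card_zero]

lemma card_filter_triple_congr (p : ℂ → Prop) [DecidablePred p] {x y z x' y' z' : ℂ}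
    (h1 : p x ↔ p x') (h2 : p y ↔ p y') (h3 : p z ↔ p z') :
    Multiset.card (Multiset.filter p {x, y, z}) =
      Multiset.card (Multiset.filter p {x', y', z'}) := by
  rw [card_filter_triple, card_filter_triple,
    if_congr h1 rfl rfl, if_congr h2 rfl rfl, if_congr h3 rfl rfl]
lemma quad_match (B₁ C₁ B₂ C₂ : ℂ) :
    ∃ α₁ α₂ β₁ β₂ : ℂ,
      (X^2 + C B₁ * X + C C₁).roots = {α₁, α₂} ∧
      (X^2 + C B₂ * X + C C₂).roots = {β₁, β₂} ∧
      ‖α₁ - β₁‖ ≤ ‖B₁ - B₂‖/2 + Real.sqrt (‖(B₁^2 - 4*C₁) - (B₂^2 - 4*C₂)‖)/2 ∧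
      ‖α₂ - β₂‖ ≤ ‖B₁ - B₂‖/2 + Real.sqrt (‖(B₁^2 - 4*C₁) - (B₂^2 - 4*C₂)‖)/2 := by
  obtain ⟨u₁, hu₁⟩ := IsAlgClosed.exists_pow_nat_eq (B₁^2 - 4*C₁) (n := 2) (by norm_num)
  obtain ⟨u₂, hu₂, hle⟩ : ∃ u₂, u₂^2 = B₂^2 - 4*C₂ ∧ ‖u₁ - u₂‖ ≤ ‖u₁ + u₂‖ := by
    obtain ⟨u, hu⟩ := IsAlgClosed.exists_pow_nat_eq (B₂^2 - 4*C₂) (n := 2) (by norm_num)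
    rcases le_total ‖u₁ - u‖ ‖u₁ + u‖ with hc | hc
    · exact ⟨u, hu, hc⟩
    · refine ⟨-u, by rw [neg_pow]; simpa using hu, ?_⟩
      simpa [sub_neg_eq_add, ← sub_eq_add_neg] using hc
  have hkey : ‖u₁ - u₂‖ ≤ Real.sqrt (‖(B₁^2 - 4*C₁) - (B₂^2 - 4*C₂)‖) := by
    apply Real.le_sqrt_of_sq_le
    rw [show (B₁^2 - 4*C₁) - (B₂^2 - 4*C₂) = (u₁ - u₂) * (u₁ + u₂) by
      rw [← hu₁, ← hu₂]; ring]
    rw [norm_mul]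
    calc ‖u₁ - u₂‖^2 = ‖u₁ - u₂‖ * ‖u₁ - u₂‖ := sq ‖u₁ - u₂‖ ▸ by ring
      _ ≤ ‖u₁ - u₂‖ * ‖u₁ + u₂‖ := mul_le_mul_of_nonneg_left hle (norm_nonneg _)
  refine ⟨(-B₁ + u₁)/2, (-B₁ - u₁)/2, (-B₂ + u₂)/2, (-B₂ - u₂)/2,
    quad_roots hu₁, quad_roots hu₂, ?_, ?_⟩
  · rw [show (-B₁ + u₁)/2 - ((-B₂ + u₂)/2) = (-(B₁ - B₂) + (u₁ - u₂))/2 by ring]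
    calc ‖(-(B₁ - B₂) + (u₁ - u₂))/2‖ ≤ (‖B₁ - B₂‖ + ‖u₁ - u₂‖)/2 := by
          rw [norm_div, Complex.norm_ofNat]
          gcongr
          calc ‖-(B₁ - B₂) + (u₁ - u₂)‖ ≤ ‖-(B₁ - B₂)‖ + ‖u₁ - u₂‖ := norm_add_le _ _
            _ = ‖B₁ - B₂‖ + ‖u₁ - u₂‖ := by rw [norm_neg]
      _ ≤ _ := by linarith [hkey]
  · rw [show (-B₁ - u₁)/2 - ((-B₂ - u₂)/2) = (-(B₁ - B₂) - (u₁ - u₂))/2 by ring]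
    calc ‖(-(B₁ - B₂) - (u₁ - u₂))/2‖ ≤ (‖B₁ - B₂‖ + ‖u₁ - u₂‖)/2 := by
          rw [norm_div, Complex.norm_ofNat]
          gcongr
          calc ‖-(B₁ - B₂) - (u₁ - u₂)‖ ≤ ‖-(B₁ - B₂)‖ + ‖u₁ - u₂‖ := norm_sub_le _ _
            _ = ‖B₁ - B₂‖ + ‖u₁ - u₂‖ := by rw [norm_neg]
      _ ≤ _ := by linarith [hkey]
noncomputable def Bco (f : ℝ) (l a : ℂ) : ℂ := l - (f:ℂ) + a
noncomputable def Cco (v f : ℝ) (l a : ℂ) : ℂ := -(2*(v:ℂ)*l) + (l - (f:ℂ))*a + a^2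

lemma Pc_factor {v f : ℝ} {l a : ℂ} (ha : (Pc v f l).eval a = 0) :
    Pc v f l = (X - C a) * (X^2 + C (Bco f l a) * X + C (Cco v f l a)) := by
  have h0 : a^3 + (l - (f:ℂ))*a^2 + (-(2*(v:ℂ)*l))*a + (-((v:ℂ)*l^2)) = 0 := by
    rw [Pc_eval] at ha; linear_combination ha
  have := cubic_factor h0
  unfold Pc Bco Cco
  rw [show (X^3 + C (l - (f:ℂ)) * X^2 - C (2*(v:ℂ)*l) * X - C ((v:ℂ)*l^2) : Polynomial ℂ)
      = X^3 + C (l - (f:ℂ)) * X^2 + C (-(2*(v:ℂ)*l)) * X + C (-((v:ℂ)*l^2)) by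
    simp only [map_neg]; ring]
  rw [this]

lemma Pc_roots_decomp {v f : ℝ} {l a : ℂ} (ha : (Pc v f l).eval a = 0) :
    (Pc v f l).roots = a ::ₘ (X^2 + C (Bco f l a) * X + C (Cco v f l a)).roots := by
  rw [Pc_factor ha, Polynomial.roots_mul, Polynomial.roots_X_sub_C]
  · rfl
  · rw [← Pc_factor ha]
    exact (Pc_monic v f l).ne_zero

set_option maxHeartbeats 800000 in
lemma Pc_locally_const {v f : ℝ} (hv : 0 < v) (hd : f < v) {l₀ : ℂ} (hl₀ : 0 < l₀.re) :
    ∃ ε > 0, ∀ l : ℂ, ‖l - l₀‖ < ε →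
      Multiset.card (((Pc v f l).roots).filter (fun μ => 0 < μ.re)) =
      Multiset.card (((Pc v f l₀).roots).filter (fun μ => 0 < μ.re)) := by
  obtain ⟨b₁, b₂, b₃, hb⟩ := Multiset.card_eq_three.mp (Pc_roots_card v f l₀)
  have hbmem : ∀ b ∈ ({b₁,b₂,b₃} : Multiset ℂ), (Pc v f l₀).eval b = 0 := by
    intro b hbm
    exact Pc_mem_roots.mp (by rw [hb]; exact hbm)
  have hb₁ : (Pc v f l₀).eval b₁ = 0 := hbmem b₁ (by simp)
  have hre : ∀ b ∈ ({b₁,b₂,b₃} : Multiset ℂ), b.re ≠ 0 := by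
    intro b hbm
    have := hbmem b hbm
    rw [Pc_eval] at this
    exact no_imag_root hv hd hl₀ this
  have hre₁ : 0 < |b₁.re| := abs_pos.mpr (hre b₁ (by simp))
  have hre₂ : 0 < |b₂.re| := abs_pos.mpr (hre b₂ (by simp))
  have hre₃ : 0 < |b₃.re| := abs_pos.mpr (hre b₃ (by simp))
  obtain ⟨δ, hδdef⟩ : ∃ d : ℝ, d = min |b₁.re| (min |b₂.re| |b₃.re|) := ⟨_, rfl⟩
  have hδpos : 0 < δ := by rw [hδdef]; exact lt_min hre₁ (lt_min hre₂ hre₃)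
  have hδ₁ : δ ≤ |b₁.re| := by rw [hδdef]; exact min_le_left _ _
  have hδ₂ : δ ≤ |b₂.re| := by rw [hδdef]; exact le_trans (min_le_right _ _) (min_le_left _ _)
  have hδ₃ : δ ≤ |b₃.re| := by rw [hδdef]; exact le_trans (min_le_right _ _) (min_le_right _ _)
  obtain ⟨τ, hτdef⟩ : ∃ t : ℝ, t = min δ 1 := ⟨_, rfl⟩
  have hτpos : 0 < τ := by rw [hτdef]; exact lt_min hδpos one_pos
  have hτδ : τ ≤ δ := by rw [hτdef]; exact min_le_left _ _
  have hτ1 : τ ≤ 1 := by rw [hτdef]; exact min_le_right _ _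
  obtain ⟨K₁, hK₁def⟩ : ∃ k : ℝ, k = ‖b₁‖^2 + 2*v*‖b₁‖ + v*(2*‖l₀‖+1) := ⟨_, rfl⟩
  have hK₁ : 0 < K₁ := by
    rw [hK₁def]
    have h1 : 0 < v*(2*‖l₀‖+1) := mul_pos hv (by positivity)
    have h2 : 0 ≤ ‖b₁‖^2 + 2*v*‖b₁‖ := by positivity
    linarith
  obtain ⟨K₂, hK₂def⟩ : ∃ k : ℝ, k = (2*‖l₀‖+1+2*|f|) + 2*(‖b₁‖+1) + 8*v := ⟨_, rfl⟩
  have hK₂ : 0 < K₂ := by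
    rw [hK₂def]
    have : 0 < 8*v := by linarith
    have h2 : 0 ≤ (2*‖l₀‖+1+2*|f|) + 2*(‖b₁‖+1) := by positivity
    linarith
  obtain ⟨K₃, hK₃def⟩ : ∃ k : ℝ, k = 2*(‖l₀‖+|f|) + 3*(2*‖b₁‖+1) := ⟨_, rfl⟩
  have hK₃ : 0 < K₃ := by rw [hK₃def]; positivity
  obtain ⟨m, hmdef⟩ : ∃ m : ℝ, m = min (τ/2) (τ^2/(4*(K₃+1))) := ⟨_, rfl⟩
  have hm : 0 < m := by rw [hmdef]; exact lt_min (by linarith) (by positivity)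
  have hmτ2 : m ≤ τ/2 := by rw [hmdef]; exact min_le_left _ _
  have hmK₃ : m ≤ τ^2/(4*(K₃+1)) := by rw [hmdef]; exact min_le_right _ _
  refine ⟨min (min 1 (τ/2)) (min (τ^2/(4*(K₂+1))) (m^3/(K₁+1))), by positivity, ?_⟩
  intro l hl
  obtain ⟨η, hηdef⟩ : ∃ e : ℝ, e = ‖l - l₀‖ := ⟨_, rfl⟩
  rw [← hηdef] at hl
  have hη0 : 0 ≤ η := by rw [hηdef]; exact norm_nonneg _
  have hη1 : η < 1 := lt_of_lt_of_le hl (le_trans (min_le_left _ _) (min_le_left _ _))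
  have hη2 : η < τ/2 := lt_of_lt_of_le hl (le_trans (min_le_left _ _) (min_le_right _ _))
  have hη3 : η < τ^2/(4*(K₂+1)) :=
    lt_of_lt_of_le hl (le_trans (min_le_right _ _) (min_le_left _ _))
  have hη4 : η < m^3/(K₁+1) :=
    lt_of_lt_of_le hl (le_trans (min_le_right _ _) (min_le_right _ _))
  -- eval bound at b₁
  have heval : (Pc v f l).eval b₁ =
      (l-l₀)*b₁^2 - 2*(v:ℂ)*(l-l₀)*b₁ - (v:ℂ)*(l+l₀)*(l-l₀) := by
    have h0 := hb₁
    rw [Pc_eval] at h0 ⊢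
    linear_combination h0
  have hll₀ : ‖l + l₀‖ ≤ 2*‖l₀‖ + 1 := by
    calc ‖l + l₀‖ = ‖(l - l₀) + 2*l₀‖ := by ring_nf
      _ ≤ ‖l - l₀‖ + ‖(2:ℂ)*l₀‖ := norm_add_le _ _
      _ = η + 2*‖l₀‖ := by rw [norm_mul, Complex.norm_ofNat, ← hηdef]
      _ ≤ 2*‖l₀‖ + 1 := by linarith
  have hnv : ‖(v:ℂ)‖ = v := by
    rw [Complex.norm_real, Real.norm_eq_abs, abs_of_pos hv]
  have hvalbound : ‖(Pc v f l).eval b₁‖ ≤ η * K₁ := by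
    rw [heval]
    have t1 : ‖(l-l₀)*b₁^2‖ = η * ‖b₁‖^2 := by rw [norm_mul, norm_pow, ← hηdef]
    have t2 : ‖2*(v:ℂ)*(l-l₀)*b₁‖ = 2*v*η*‖b₁‖ := by
      rw [norm_mul, norm_mul, norm_mul, Complex.norm_ofNat, hnv, ← hηdef]
    have t3 : ‖(v:ℂ)*(l+l₀)*(l-l₀)‖ ≤ v*(2*‖l₀‖+1)*η := by
      rw [norm_mul, norm_mul, hnv, ← hηdef]
      have : 0 ≤ v := hv.le
      calc v * ‖l+l₀‖ * η ≤ v * (2*‖l₀‖+1) * η := by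
            apply mul_le_mul_of_nonneg_right _ hη0
            exact mul_le_mul_of_nonneg_left hll₀ hv.le
        _ = v*(2*‖l₀‖+1)*η := rfl
    calc ‖(l-l₀)*b₁^2 - 2*(v:ℂ)*(l-l₀)*b₁ - (v:ℂ)*(l+l₀)*(l-l₀)‖
        ≤ ‖(l-l₀)*b₁^2 - 2*(v:ℂ)*(l-l₀)*b₁‖ + ‖(v:ℂ)*(l+l₀)*(l-l₀)‖ := norm_sub_le _ _
      _ ≤ ‖(l-l₀)*b₁^2‖ + ‖2*(v:ℂ)*(l-l₀)*b₁‖ + ‖(v:ℂ)*(l+l₀)*(l-l₀)‖ := by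
          linarith [norm_sub_le ((l-l₀)*b₁^2) (2*(v:ℂ)*(l-l₀)*b₁)]
      _ ≤ η * ‖b₁‖^2 + 2*v*η*‖b₁‖ + v*(2*‖l₀‖+1)*η := by
          rw [t1, t2]; linarith
      _ = η * K₁ := by rw [hK₁def]; ring
  -- roots of Pc v f l
  obtain ⟨a₁, a₂, a₃, hA⟩ := Multiset.card_eq_three.mp (Pc_roots_card v f l)
  have hprodeval : (Pc v f l).eval b₁ = (b₁-a₁)*((b₁-a₂)*((b₁-a₃)*1)) := by
    conv_lhs => rw [(prod_multiset_X_sub_C_of_monic_of_roots_card_eq (Pc_monic v f l)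
      (by rw [Pc_roots_card, Pc_natDegree])).symm]
    rw [hA]
    simp [Multiset.map_cons, Multiset.prod_cons]
  have hprodbound : ‖b₁-a₁‖ * (‖b₁-a₂‖ * ‖b₁-a₃‖) ≤ η*K₁ := by
    have := hvalbound
    rw [hprodeval] at this
    simpa [norm_mul] using this
  have hexist : ∃ x ∈ ({a₁,a₂,a₃} : Multiset ℂ), ‖b₁ - x‖^3 ≤ η*K₁ := by
    by_contra hcon
    push_neg at hcon
    have h1 := hcon a₁ (by simp)
    have h2 := hcon a₂ (by simp)
    have h3 := hcon a₃ (by simp)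
    have ht0 : 0 ≤ η*K₁ := mul_nonneg hη0 hK₁.le
    have key : (η*K₁)^3 < (‖b₁-a₁‖ * (‖b₁-a₂‖ * ‖b₁-a₃‖))^3 := by
      calc (η*K₁)^3 = (η*K₁)*((η*K₁)*(η*K₁)) := by ring
        _ < ‖b₁-a₁‖^3 * (‖b₁-a₂‖^3 * ‖b₁-a₃‖^3) :=
            mul_lt_mul'' h1 (mul_lt_mul'' h2 h3 ht0 ht0) ht0 (mul_nonneg ht0 ht0)
        _ = (‖b₁-a₁‖ * (‖b₁-a₂‖ * ‖b₁-a₃‖))^3 := by ring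
    have key2 : (‖b₁-a₁‖ * (‖b₁-a₂‖ * ‖b₁-a₃‖))^3 ≤ (η*K₁)^3 :=
      pow_le_pow_left₀ (by positivity) hprodbound 3
    linarith
  obtain ⟨a, hamem, hacube⟩ := hexist
  have haroot : (Pc v f l).eval a = 0 := Pc_mem_roots.mp (by rw [hA]; exact hamem)
  obtain ⟨D, hDdef⟩ : ∃ d : ℝ, d = ‖b₁ - a‖ := ⟨_, rfl⟩
  rw [← hDdef] at hacube
  have hD0 : 0 ≤ D := by rw [hDdef]; exact norm_nonneg _
  have hDm : D < m := by
    have h1 : η*(K₁+1) < m^3 := (lt_div_iff₀ (by linarith)).mp hη4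
    have h2 : η*K₁ ≤ η*(K₁+1) := by
      have hexp : η*(K₁+1) = η*K₁ + η := by ring
      linarith
    by_contra hcon
    push_neg at hcon
    have : m^3 ≤ D^3 := pow_le_pow_left₀ hm.le hcon 3
    linarith
  have hDτ2 : D < τ/2 := lt_of_lt_of_le hDm hmτ2
  have hD1 : D ≤ 1 := by linarith
  -- decompositions
  have hdecompL := Pc_roots_decomp haroot
  have hdecompL₀ := Pc_roots_decomp hb₁
  have hQb : (X^2 + C (Bco f l₀ b₁) * X + C (Cco v f l₀ b₁)).roots = {b₂, b₃} :=
    (Multiset.cons_inj_right b₁).mp (hdecompL₀.symm.trans hb)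
  obtain ⟨α₁, α₂, β₁, β₂, hrootsA, hrootsB, hd₁, hd₂⟩ :=
    quad_match (Bco f l a) (Cco v f l a) (Bco f l₀ b₁) (Cco v f l₀ b₁)
  -- bound ‖ΔB‖
  have hab : ‖a - b₁‖ = D := by rw [hDdef, norm_sub_rev]
  have hBdiff : ‖Bco f l a - Bco f l₀ b₁‖ ≤ η + D := by
    have : Bco f l a - Bco f l₀ b₁ = (l - l₀) + (a - b₁) := by unfold Bco; ring
    rw [this]
    calc ‖(l - l₀) + (a - b₁)‖ ≤ ‖l - l₀‖ + ‖a - b₁‖ := norm_add_le _ _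
      _ = η + D := by rw [hab, ← hηdef]
  -- bound ‖Δ(B²-4C)‖
  have hna : ‖a‖ ≤ ‖b₁‖ + 1 := by
    calc ‖a‖ = ‖b₁ - (b₁ - a)‖ := by ring_nf
      _ ≤ ‖b₁‖ + ‖b₁ - a‖ := norm_sub_le _ _
      _ ≤ ‖b₁‖ + 1 := by rw [← hDdef]; linarith
  have hnf : ‖(f:ℂ)‖ = |f| := by rw [Complex.norm_real, Real.norm_eq_abs]
  have hQdiff : ‖((Bco f l a)^2 - 4*(Cco v f l a)) -
      ((Bco f l₀ b₁)^2 - 4*(Cco v f l₀ b₁))‖ ≤ K₂*η + K₃*D := by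
    have hid : ((Bco f l a)^2 - 4*(Cco v f l a)) - ((Bco f l₀ b₁)^2 - 4*(Cco v f l₀ b₁))
        = ((l-l₀)*(l+l₀-2*(f:ℂ)) + 8*(v:ℂ)*(l-l₀))
          - 2*(a*(l-l₀) + (a-b₁)*(l₀-(f:ℂ)))
          - 3*((a-b₁)*(a+b₁)) := by
      unfold Bco Cco; ring
    rw [hid]
    have e1 : ‖(l-l₀)*(l+l₀-2*(f:ℂ))‖ ≤ η * (2*‖l₀‖+1+2*|f|) := by
      rw [norm_mul, ← hηdef]
      apply mul_le_mul_of_nonneg_left _ hη0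
      calc ‖l+l₀-2*(f:ℂ)‖ ≤ ‖l+l₀‖ + ‖(2:ℂ)*(f:ℂ)‖ := norm_sub_le _ _
        _ ≤ (2*‖l₀‖+1) + 2*|f| := by
            rw [norm_mul, Complex.norm_ofNat, hnf]; linarith [hll₀]
        _ = 2*‖l₀‖+1+2*|f| := by ring
    have e2 : ‖(2:ℂ)*(a*(l-l₀) + (a-b₁)*(l₀-(f:ℂ)))‖ ≤ 2*((‖b₁‖+1)*η + D*(‖l₀‖+|f|)) := by
      rw [norm_mul, Complex.norm_ofNat]
      apply mul_le_mul_of_nonneg_left _ (by norm_num)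
      calc ‖a*(l-l₀) + (a-b₁)*(l₀-(f:ℂ))‖
          ≤ ‖a‖*‖l-l₀‖ + ‖a-b₁‖*‖l₀-(f:ℂ)‖ := by
            refine le_trans (norm_add_le _ _) ?_
            rw [norm_mul, norm_mul]
        _ ≤ (‖b₁‖+1)*η + D*(‖l₀‖+|f|) := by
            have g1 : ‖a‖*‖l-l₀‖ ≤ (‖b₁‖+1)*η := by
              rw [← hηdef]
              exact mul_le_mul hna (le_refl _) hη0 (by positivity)
            have g2 : ‖a-b₁‖*‖l₀-(f:ℂ)‖ ≤ D*(‖l₀‖+|f|) := by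
              rw [hab]
              apply mul_le_mul_of_nonneg_left _ hD0
              calc ‖l₀-(f:ℂ)‖ ≤ ‖l₀‖ + ‖(f:ℂ)‖ := norm_sub_le _ _
                _ = ‖l₀‖ + |f| := by rw [hnf]
            linarith
    have e3 : ‖(3:ℂ)*((a-b₁)*(a+b₁))‖ ≤ 3*(D*(2*‖b₁‖+1)) := by
      rw [norm_mul, Complex.norm_ofNat, norm_mul, hab]
      apply mul_le_mul_of_nonneg_left _ (by norm_num)
      apply mul_le_mul_of_nonneg_left _ hD0
      calc ‖a+b₁‖ ≤ ‖a‖ + ‖b₁‖ := norm_add_le _ _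
        _ ≤ 2*‖b₁‖+1 := by linarith
    have e4 : ‖(8:ℂ)*(v:ℂ)*(l-l₀)‖ = 8*v*η := by
      rw [norm_mul, norm_mul, Complex.norm_ofNat, hnv, ← hηdef]
    calc ‖((l-l₀)*(l+l₀-2*(f:ℂ)) + 8*(v:ℂ)*(l-l₀))
          - 2*(a*(l-l₀) + (a-b₁)*(l₀-(f:ℂ)))
          - 3*((a-b₁)*(a+b₁))‖
        ≤ ‖(l-l₀)*(l+l₀-2*(f:ℂ)) + 8*(v:ℂ)*(l-l₀)‖
          + ‖(2:ℂ)*(a*(l-l₀) + (a-b₁)*(l₀-(f:ℂ)))‖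
          + ‖(3:ℂ)*((a-b₁)*(a+b₁))‖ := by
          have s1 := norm_sub_le (((l-l₀)*(l+l₀-2*(f:ℂ)) + 8*(v:ℂ)*(l-l₀))
            - 2*(a*(l-l₀) + (a-b₁)*(l₀-(f:ℂ)))) (3*((a-b₁)*(a+b₁)))
          have s2 := norm_sub_le ((l-l₀)*(l+l₀-2*(f:ℂ)) + 8*(v:ℂ)*(l-l₀))
            (2*(a*(l-l₀) + (a-b₁)*(l₀-(f:ℂ))))
          linarith
      _ ≤ (‖(l-l₀)*(l+l₀-2*(f:ℂ))‖ + ‖(8:ℂ)*(v:ℂ)*(l-l₀)‖)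
          + ‖(2:ℂ)*(a*(l-l₀) + (a-b₁)*(l₀-(f:ℂ)))‖
          + ‖(3:ℂ)*((a-b₁)*(a+b₁))‖ := by
          linarith [norm_add_le ((l-l₀)*(l+l₀-2*(f:ℂ))) ((8:ℂ)*(v:ℂ)*(l-l₀))]
      _ ≤ (η*(2*‖l₀‖+1+2*|f|) + 8*v*η) + 2*((‖b₁‖+1)*η + D*(‖l₀‖+|f|))
          + 3*(D*(2*‖b₁‖+1)) := by
          rw [e4] at *
          linarith [e1, e2, e3]
      _ = K₂*η + K₃*D := by rw [hK₂def, hK₃def]; ring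
  -- final smallness
  have hQτ : ‖((Bco f l a)^2 - 4*(Cco v f l a)) -
      ((Bco f l₀ b₁)^2 - 4*(Cco v f l₀ b₁))‖ < τ^2 := by
    have g1 : K₂*η < τ^2/4 := by
      have hlt : η*(4*(K₂+1)) < τ^2 := (lt_div_iff₀ (by linarith : (0:ℝ) < 4*(K₂+1))).mp hη3
      have hexp : η*(4*(K₂+1)) = 4*(K₂*η) + 4*η := by ring
      linarith
    have g2 : K₃*D < τ^2/4 := by
      have hDb : D < τ^2/(4*(K₃+1)) := lt_of_lt_of_le hDm hmK₃
      have hlt : D*(4*(K₃+1)) < τ^2 := (lt_div_iff₀ (by linarith : (0:ℝ) < 4*(K₃+1))).mp hDb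
      have hexp : D*(4*(K₃+1)) = 4*(K₃*D) + 4*D := by ring
      linarith
    have hτsq : 0 < τ^2 := by positivity
    have : τ^2/2 < τ^2 := by linarith
    linarith [hQdiff]
  have hsqrt : Real.sqrt ‖((Bco f l a)^2 - 4*(Cco v f l a)) -
      ((Bco f l₀ b₁)^2 - 4*(Cco v f l₀ b₁))‖ < τ := (Real.sqrt_lt' hτpos).mpr hQτ
  have hE : ‖Bco f l a - Bco f l₀ b₁‖/2
      + Real.sqrt (‖((Bco f l a)^2 - 4*(Cco v f l a)) -
        ((Bco f l₀ b₁)^2 - 4*(Cco v f l₀ b₁))‖)/2 < τ := by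
    have : ‖Bco f l a - Bco f l₀ b₁‖ < τ := by linarith [hBdiff]
    linarith
  -- sign transfers
  have hsign_a : (0 < a.re ↔ 0 < b₁.re) := by
    apply re_sign_iff
    rw [hab]
    calc D < τ := by linarith
      _ ≤ δ := hτδ
      _ ≤ |b₁.re| := hδ₁
  have hpair : ({β₁, β₂} : Multiset ℂ) = {b₂, b₃} := hrootsB.symm.trans hQb
  have hβmem : ∀ β ∈ ({β₁, β₂} : Multiset ℂ), δ ≤ |β.re| := by
    intro β hβ
    rw [hpair] at hβ
    rcases Multiset.mem_cons.mp hβ with h | h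
    · rw [h]; exact hδ₂
    · rw [Multiset.mem_singleton.mp h]; exact hδ₃
  have hsign₁ : (0 < α₁.re ↔ 0 < β₁.re) := by
    apply re_sign_iff
    calc ‖α₁ - β₁‖ ≤ _ := hd₁
      _ < τ := hE
      _ ≤ δ := hτδ
      _ ≤ |β₁.re| := hβmem β₁ (by simp)
  have hsign₂ : (0 < α₂.re ↔ 0 < β₂.re) := by
    apply re_sign_iff
    calc ‖α₂ - β₂‖ ≤ _ := hd₂
      _ < τ := hE
      _ ≤ δ := hτδ
      _ ≤ |β₂.re| := hβmem β₂ (by simp)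
  -- conclude
  have hrootsl : (Pc v f l).roots = {a, α₁, α₂} := by
    rw [hdecompL, hrootsA]; rfl
  have hrootsl₀ : (Pc v f l₀).roots = {b₁, β₁, β₂} := by
    rw [hdecompL₀, hrootsB]; rfl
  rw [hrootsl, hrootsl₀]
  exact card_filter_triple_congr _ hsign_a hsign₁ hsign₂

lemma Pc_ref_count {v f : ℝ} (hv : 0 < v) (hd : f < v) :
    ∃ l : ℂ, 0 < l.re ∧
      Multiset.card (((Pc v f l).roots).filter (fun μ => 0 < μ.re)) = 1 := by
  obtain ⟨r, hrdef⟩ : ∃ r : ℝ, r = |f| + 1 := ⟨_, rfl⟩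
  have hr : 0 < r := by rw [hrdef]; positivity
  have hrf : f < r := by rw [hrdef]; linarith [le_abs_self f]
  obtain ⟨s, hsdef⟩ : ∃ s : ℝ, s = Real.sqrt (r^2 + 4*v*(v-f)) := ⟨_, rfl⟩
  have harg : 0 < r^2 + 4*v*(v-f) := by
    have h0 : 0 < 4*v*(v-f) := mul_pos (by linarith) (by linarith)
    nlinarith [sq_nonneg r]
  have hs2 : s^2 = r^2 + 4*v*(v-f) := by rw [hsdef]; exact Real.sq_sqrt harg.le
  have hs0 : 0 < s := by rw [hsdef]; exact Real.sqrt_pos.mpr harg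
  obtain ⟨lr, hlrdef⟩ : ∃ lr : ℝ, lr = r*(r-2*v+s)/(2*v) := ⟨_, rfl⟩
  have hnum : 0 < r - 2*v + s := by
    rcases le_or_gt (2*v) r with hc | hc
    · linarith
    · have h1 : s^2 - (2*v - r)^2 = 4*v*(r - f) := by rw [hs2]; ring
      have h2 : 0 < 4*v*(r-f) := mul_pos (by linarith) (by linarith)
      nlinarith
  have hlr : 0 < lr := by
    rw [hlrdef]
    positivity
  have h2vl : 2*v*lr = r*(r-2*v+s) := by
    rw [hlrdef]; field_simp
  have key4 : 4*v*(v*lr^2 - r*(r-2*v)*lr - r^2*(r-f)) = 0 := by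
    linear_combination (2*v*lr + r*(r-2*v+s) - 2*r*(r-2*v)) * h2vl + r^2 * hs2
  have key : v*lr^2 - r*(r-2*v)*lr - r^2*(r-f) = 0 := by
    have h4v : (4:ℝ)*v ≠ 0 := by positivity
    exact (mul_eq_zero.mp key4).resolve_left h4v
  obtain ⟨B, hBdef⟩ : ∃ B : ℝ, B = lr + r - f := ⟨_, rfl⟩
  have hB : 0 < B := by rw [hBdef]; linarith
  obtain ⟨Cc, hCcdef⟩ : ∃ c : ℝ, c = v*lr^2/r := ⟨_, rfl⟩
  have hCc : 0 < Cc := by rw [hCcdef]; positivity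
  have hrC : r*Cc = v*lr^2 := by rw [hCcdef]; field_simp
  have h1 : r*(Cc - r*B + 2*v*lr) = 0 := by
    linear_combination hrC + key + (-(r^2))*hBdef
  have hmid : Cc - r*B + 2*v*lr = 0 :=
    (mul_eq_zero.mp h1).resolve_left hr.ne'
  refine ⟨((lr:ℝ):ℂ), by simpa using hlr, ?_⟩
  -- polynomial factorization
  have expand : (X - C ((r:ℝ):ℂ)) * (X^2 + C ((B:ℝ):ℂ) * X + C ((Cc:ℝ):ℂ))
      = X^3 + C (((B:ℝ):ℂ) - ((r:ℝ):ℂ)) * X^2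
        + C (((Cc:ℝ):ℂ) - ((r:ℝ):ℂ)*((B:ℝ):ℂ)) * X - C (((r:ℝ):ℂ)*((Cc:ℝ):ℂ)) := by
    simp only [map_sub, map_mul]
    ring
  have c2 : ((B:ℝ):ℂ) - ((r:ℝ):ℂ) = ((lr:ℝ):ℂ) - ((f:ℝ):ℂ) := by
    have : B - r = lr - f := by rw [hBdef]; ring
    exact_mod_cast congrArg (fun t : ℝ => (t:ℂ)) this
  have c1 : ((Cc:ℝ):ℂ) - ((r:ℝ):ℂ)*((B:ℝ):ℂ) = -(2*((v:ℝ):ℂ)*((lr:ℝ):ℂ)) := by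
    have : Cc - r*B = -(2*v*lr) := by linarith
    exact_mod_cast congrArg (fun t : ℝ => (t:ℂ)) this
  have c0 : ((r:ℝ):ℂ)*((Cc:ℝ):ℂ) = ((v:ℝ):ℂ)*((lr:ℝ):ℂ)^2 := by
    exact_mod_cast congrArg (fun t : ℝ => (t:ℂ)) hrC
  have hpoly : Pc v f ((lr:ℝ):ℂ)
      = (X - C ((r:ℝ):ℂ)) * (X^2 + C ((B:ℝ):ℂ) * X + C ((Cc:ℝ):ℂ)) := by
    rw [expand, c2, c1, c0]
    unfold Pc
    simp only [map_neg]
    ring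
  have hquad_ne : (X^2 + C ((B:ℝ):ℂ) * X + C ((Cc:ℝ):ℂ)) ≠ 0 := by
    intro hc
    have := congrArg (fun p => Polynomial.coeff p 2) hc
    simp [coeff_add, coeff_X_pow, coeff_C] at this
  have hroots : (Pc v f ((lr:ℝ):ℂ)).roots
      = ((r:ℝ):ℂ) ::ₘ (X^2 + C ((B:ℝ):ℂ) * X + C ((Cc:ℝ):ℂ)).roots := by
    rw [hpoly, Polynomial.roots_mul (mul_ne_zero (X_sub_C_ne_zero _) hquad_ne),
      Polynomial.roots_X_sub_C]
    rfl
  rw [hroots, Multiset.filter_cons]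
  have hrpos : (0:ℝ) < (((r:ℝ):ℂ)).re := by simpa using hr
  rw [if_pos hrpos]
  have hfilter : Multiset.filter (fun μ => 0 < μ.re)
      (X^2 + C ((B:ℝ):ℂ) * X + C ((Cc:ℝ):ℂ)).roots = 0 := by
    apply Multiset.filter_eq_nil.mpr
    intro z hz
    have hz0 : z^2 + ((B:ℝ):ℂ)*z + ((Cc:ℝ):ℂ) = 0 := by
      have := Polynomial.mem_roots hquad_ne |>.mp hz
      simpa [Polynomial.IsRoot, eval_add, eval_mul, eval_pow] using this
    have := quad_root_neg_re hB hCc hz0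
    linarith
  rw [hfilter]
  simp

theorem Pc_count {v f : ℝ} (hv : 0 < v) (hd : f < v) {l : ℂ} (hl : 0 < l.re) :
    (∀ μ ∈ (Pc v f l).roots, μ.re ≠ 0) ∧
    Multiset.card ((Pc v f l).roots.filter (fun μ => 0 < μ.re)) = 1 ∧
    Multiset.card ((Pc v f l).roots.filter (fun μ => μ.re < 0)) = 2 := by
  have hnoimag : ∀ l' : ℂ, 0 < l'.re → ∀ μ ∈ (Pc v f l').roots, μ.re ≠ 0 := by
    intro l' hl' μ hμ
    have := Pc_mem_roots.mp hμ
    rw [Pc_eval] at this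
    exact no_imag_root hv hd hl' this
  -- the count function
  set N : ℂ → ℕ := fun z => Multiset.card (((Pc v f z).roots).filter (fun μ => 0 < μ.re))
    with hNdef
  have hopen : ∀ n : ℕ, IsOpen {z : ℂ | 0 < z.re ∧ N z = n} := by
    intro n
    rw [Metric.isOpen_iff]
    rintro z ⟨hz, hNz⟩
    obtain ⟨ε₀, hε₀, hconst⟩ := Pc_locally_const hv hd hz
    refine ⟨min ε₀ z.re, lt_min hε₀ hz, ?_⟩
    intro w hw
    rw [Metric.mem_ball] at hw
    have hwz : ‖w - z‖ < min ε₀ z.re := by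
      rwa [dist_eq_norm] at hw
    have hwre : 0 < w.re := by
      have h1 : |w.re - z.re| ≤ ‖w - z‖ := by
        have := Complex.abs_re_le_norm (w - z)
        simpa [Complex.sub_re] using this
      have h2 : ‖w - z‖ < z.re := lt_of_lt_of_le hwz (min_le_right _ _)
      rw [abs_sub_le_iff] at h1
      linarith [h1.2]
    refine ⟨hwre, ?_⟩
    rw [← hNz]
    exact hconst w (lt_of_lt_of_le hwz (min_le_left _ _))
  obtain ⟨l₁, hl₁, hN₁⟩ := Pc_ref_count hv hd
  have hmain : ∀ z : ℂ, 0 < z.re → N z = 1 := by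
    by_contra hcon
    push_neg at hcon
    obtain ⟨z₂, hz₂, hNz₂⟩ := hcon
    have hS : IsPreconnected {z : ℂ | 0 < z.re} :=
      (convex_halfSpace_re_gt 0).isPreconnected
    have hsub : {z : ℂ | 0 < z.re} ⊆
        {z : ℂ | 0 < z.re ∧ N z = 1} ∪ {z : ℂ | 0 < z.re ∧ N z ≠ 1} := by
      intro z hz
      by_cases hc : N z = 1
      · exact Or.inl ⟨hz, hc⟩
      · exact Or.inr ⟨hz, hc⟩
    have hW : IsOpen {z : ℂ | 0 < z.re ∧ N z ≠ 1} := by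
      have : {z : ℂ | 0 < z.re ∧ N z ≠ 1} = ⋃ n ∈ {n : ℕ | n ≠ 1}, {z : ℂ | 0 < z.re ∧ N z = n} := by
        ext z
        simp only [Set.mem_setOf_eq, Set.mem_iUnion]
        constructor
        · rintro ⟨h1, h2⟩; exact ⟨N z, h2, h1, rfl⟩
        · rintro ⟨n, hn, h1, h2⟩; exact ⟨h1, h2 ▸ hn⟩
      rw [this]
      exact isOpen_biUnion (fun n _ => hopen n)
    obtain ⟨x, hx⟩ := hS _ _ (hopen 1) hW hsub ⟨l₁, hl₁, hl₁, hN₁⟩ ⟨z₂, hz₂, hz₂, hNz₂⟩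
    exact hx.2.2.2 hx.2.1.2
  have hN : N l = 1 := hmain l hl
  refine ⟨hnoimag l hl, hN, ?_⟩
  -- negative count
  have htot : Multiset.card ((Pc v f l).roots) = 3 := Pc_roots_card v f l
  have hsplit := Multiset.filter_add_not (fun μ => 0 < μ.re) ((Pc v f l).roots)
  have hcard := congrArg Multiset.card hsplit
  rw [Multiset.card_add] at hcard
  have hfneg : Multiset.filter (fun μ => ¬ 0 < μ.re) ((Pc v f l).roots)
      = Multiset.filter (fun μ => μ.re < 0) ((Pc v f l).roots) := by
    apply Multiset.filter_congr
    intro μ hμ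
    have hne := hnoimag l hl μ hμ
    constructor
    · intro h; cases lt_or_eq_of_le (not_lt.mp h) with
      | inl h' => exact h'
      | inr h' => exact absurd h' hne
    · intro h; exact not_lt.mpr h.le
  rw [hfneg] at hcard
  have hN' : Multiset.card ((Pc v f l).roots.filter (fun μ => 0 < μ.re)) = 1 := hN
  rw [htot, hN'] at hcard
  omega


/-- Consistent splitting: for `γ = 5/3`, `0 < v₊ < 1` and `Re λ > 0`, neither limiting
coefficient matrix `A₋(λ)`, `A₊(λ)` has a purely imaginary eigenvalue; counted with
algebraic multiplicity (as roots of the characteristic polynomial), `A₋(λ)` has exactly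
one eigenvalue of positive real part and two of negative real part, while `A₊(λ)` has
exactly two eigenvalues of negative real part and one of positive real part. -/
theorem consistent_splitting
    (γ vp : ℝ) (hγ : γ = 5 / 3) (hvp0 : 0 < vp) (hvp1 : vp < 1)
    (a : ℝ) (ha : a = vp ^ γ * (1 - vp) / (1 - vp ^ γ))
    (h f : ℝ → ℝ)
    (hh : ∀ v : ℝ, h v = -v ^ (γ + 1) + a * (γ - 1) + (a + 1) * v ^ γ)
    (hf : ∀ v : ℝ, f v = v - v ^ (-γ) * h v)
    (l : ℂ) (hl : 0 < l.re)
    (Am Ap : Matrix (Fin 3) (Fin 3) ℂ)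
    (hAm : Am = !![0, l, 1; 0, 0, 1; l, l, (f 1 : ℂ) - l])
    (hAp : Ap = !![0, l, 1; 0, 0, 1; l * (vp : ℂ), l * (vp : ℂ), (f vp : ℂ) - l]) :
    (∀ μ ∈ Am.charpoly.roots, μ.re ≠ 0) ∧
    (∀ μ ∈ Ap.charpoly.roots, μ.re ≠ 0) ∧
    (Am.charpoly.roots.filter fun μ => 0 < μ.re).card = 1 ∧
    (Am.charpoly.roots.filter fun μ => μ.re < 0).card = 2 ∧
    (Ap.charpoly.roots.filter fun μ => μ.re < 0).card = 2 ∧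
    (Ap.charpoly.roots.filter fun μ => 0 < μ.re).card = 1 := by
  have hγpos : (0:ℝ) < γ := by rw [hγ]; norm_num
  have hvpγ : 0 < vp ^ γ := Real.rpow_pos_of_pos hvp0 γ
  have hvpγ1 : vp ^ γ < 1 := Real.rpow_lt_one hvp0.le hvp1 hγpos
  have ha0 : 0 < a := by
    rw [ha]
    exact div_pos (mul_pos hvpγ (by linarith)) (by linarith)
  have haγ : a * (1 - vp ^ γ) = vp ^ γ * (1 - vp) := by
    have hne : (1:ℝ) - vp ^ γ ≠ 0 := by linarith
    rw [ha, div_mul_cancel₀ _ hne]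
  have h1eq : h 1 = a * γ := by
    rw [hh]
    rw [Real.one_rpow, Real.one_rpow]
    ring
  have f1eq : f 1 = 1 - a * γ := by
    rw [hf, h1eq, Real.one_rpow]
    ring
  have hd1 : f 1 < 1 := by
    rw [f1eq]
    nlinarith [mul_pos ha0 hγpos]
  have hvpadd : vp ^ (γ + 1) = vp ^ γ * vp := by
    rw [Real.rpow_add hvp0, Real.rpow_one]
  have hvph : h vp = a * γ := by
    rw [hh, hvpadd]
    linear_combination (-1 : ℝ) * haγ
  have hvpnegγ : 0 < vp ^ (-γ) := Real.rpow_pos_of_pos hvp0 (-γ)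
  have hdvp : f vp < vp := by
    rw [hf, hvph]
    nlinarith [mul_pos hvpnegγ (mul_pos ha0 hγpos)]
  have hAmc : Am.charpoly = Pc 1 (f 1) l := by
    subst hAm
    rw [Matrix.charpoly, Matrix.det_fin_three]
    unfold Pc
    simp [Matrix.charmatrix_apply_eq, Matrix.charmatrix_apply_ne, Matrix.charmatrix,
      map_ofNat]
    ring
  have hApc : Ap.charpoly = Pc vp (f vp) l := by
    subst hAp
    rw [Matrix.charpoly, Matrix.det_fin_three]
    unfold Pc
    simp [Matrix.charmatrix_apply_eq, Matrix.charmatrix_apply_ne, Matrix.charmatrix,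
      map_ofNat]
    ring
  obtain ⟨hm1, hm2, hm3⟩ := Pc_count (v := 1) (f := f 1) one_pos hd1 hl
  obtain ⟨hp1, hp2, hp3⟩ := Pc_count (v := vp) (f := f vp) hvp0 hdvp hl
  exact ⟨by rw [hAmc]; exact hm1, by rw [hApc]; exact hp1, by rw [hAmc]; exact hm2,
    by rw [hAmc]; exact hm3, by rw [hApc]; exact hp3, by rw [hApc]; exact hp2⟩
end

section
/- Let n ≥ 1, let B be an n×n complex matrix, let C₁, C₂ > 0, let η̂ < η be real numbers with η > 0, and let M ∈ ℝ. Assume ‖exp(tB)‖ ≤ C₁e^{η̂ t} for all t ≥ 0, and let E : ℝ → (n×n complex matrices) be continuous with ‖E(y)‖ ≤ C₂e^{η y} for all y ≤ M. Fix V₋ ∈ ℂⁿ and, for a bounded continuous function U : (−∞, M] → ℂⁿ, define N(U)(x) = V₋ + ∫_{−∞}^{x} exp((x−y)B) E(y) U(y) dy. Then for all bounded continuous U₁, U₂ : (−∞, M] → ℂⁿ, sup_{x ≤ M} ‖N(U₁)(x) − N(U₂)(x)‖ ≤ q · sup_{x ≤ M} ‖U₁(x) − U₂(x)‖, where q = C₁C₂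 e^{ηM}/(η − η̂). -/
open scoped Matrix.Norms.L2Operator

open MeasureTheory Set

lemma indicator_comp_exp_mul {c : ℝ} (hc : 0 < c) (x : ℝ) :
    (fun y : ℝ => (Set.Iic (c * x)).indicator Real.exp (c * y))
      = (Set.Iic x).indicator (fun y => Real.exp (c * y)) := by
  ext y
  by_cases hy : y ≤ x
  · simp [Set.indicator_apply, Set.mem_Iic, hy, (mul_le_mul_iff_right₀ hc).2 hy]
  · have h2 : ¬ c * y ≤ c * x := fun h => hy ((mul_le_mul_iff_right₀ hc).1 h)
    simp [Set.indicator_apply, Set.mem_Iic, hy, h2]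

lemma integrableOn_exp_mul_Iic' {c : ℝ} (hc : 0 < c) (x : ℝ) :
    IntegrableOn (fun y : ℝ => Real.exp (c * y)) (Set.Iic x) := by
  have h1 : Integrable ((Set.Iic (c * x)).indicator Real.exp) :=
    (integrable_indicator_iff measurableSet_Iic).2 (integrableOn_exp_Iic (c * x))
  have h2 := (MeasureTheory.integrable_comp_mul_left_iff
      ((Set.Iic (c * x)).indicator Real.exp) hc.ne').2 h1
  rw [← integrable_indicator_iff measurableSet_Iic, ← indicator_comp_exp_mul hc x]
  exact h2

lemma integral_exp_mul_Iic' {c : ℝ} (hc : 0 < c) (x : ℝ) :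
    ∫ y in Set.Iic x, Real.exp (c * y) = Real.exp (c * x) / c := by
  calc ∫ y in Set.Iic x, Real.exp (c * y)
      = ∫ y : ℝ, (Set.Iic x).indicator (fun y => Real.exp (c * y)) y := by
        rw [integral_indicator measurableSet_Iic]
    _ = ∫ y : ℝ, (Set.Iic (c * x)).indicator Real.exp (c * y) := by
        rw [indicator_comp_exp_mul hc x]
    _ = |c⁻¹| • ∫ y : ℝ, (Set.Iic (c * x)).indicator Real.exp y :=
        MeasureTheory.Measure.integral_comp_mul_left _ c
    _ = Real.exp (c * x) / c := by
        rw [integral_indicator measurableSet_Iic, integral_exp_Iic,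
          abs_of_pos (inv_pos.2 hc), smul_eq_mul]
        ring


set_option maxHeartbeats 1000000

/-- Contraction estimate for the Duhamel fixed-point operator
`N(U)(x) = V₋ + ∫_{−∞}^x exp((x−y)B) E(y) U(y) dy` on bounded continuous functions on
`(−∞, M]`: `sup_{x ≤ M} ‖N(U₁)(x) − N(U₂)(x)‖ ≤ q · sup_{x ≤ M} ‖U₁(x) − U₂(x)‖` with
`q = C₁C₂ e^{ηM}/(η − η̂)`. All norms are Euclidean (ℓ²) norms. -/
theorem duhamel_contraction
    (n : ℕ) (hn : 1 ≤ n)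
    (B : Matrix (Fin n) (Fin n) ℂ)
    (C₁ C₂ : ℝ) (hC₁ : 0 < C₁) (hC₂ : 0 < C₂)
    (ηhat η : ℝ) (hηη : ηhat < η) (hη : 0 < η)
    (M : ℝ)
    (hB : ∀ t : ℝ, 0 ≤ t → ‖NormedSpace.exp ((t : ℂ) • B)‖ ≤ C₁ * Real.exp (ηhat * t))
    (Emat : ℝ → Matrix (Fin n) (Fin n) ℂ)
    (hEcont : Continuous Emat)
    (hEbnd : ∀ y : ℝ, y ≤ M → ‖Emat y‖ ≤ C₂ * Real.exp (η * y))
    (Vm : EuclideanSpace ℂ (Fin n))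
    (N : (ℝ → EuclideanSpace ℂ (Fin n)) → ℝ → EuclideanSpace ℂ (Fin n))
    (hN : ∀ (U : ℝ → EuclideanSpace ℂ (Fin n)) (x : ℝ),
      N U x = Vm + ∫ y in Set.Iic x,
        (Matrix.toEuclideanCLM (𝕜 := ℂ)
          (NormedSpace.exp (((x - y : ℝ) : ℂ) • B) * Emat y)) (U y))
    (U₁ U₂ : ℝ → EuclideanSpace ℂ (Fin n))
    (hU₁c : ContinuousOn U₁ (Set.Iic M)) (hU₁b : ∃ C, ∀ x ≤ M, ‖U₁ x‖ ≤ C)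
    (hU₂c : ContinuousOn U₂ (Set.Iic M)) (hU₂b : ∃ C, ∀ x ≤ M, ‖U₂ x‖ ≤ C) :
    ⨆ x ∈ Set.Iic M, ‖N U₁ x - N U₂ x‖ ≤
      (C₁ * C₂ * Real.exp (η * M) / (η - ηhat)) * ⨆ x ∈ Set.Iic M, ‖U₁ x - U₂ x‖ := by
  classical
  obtain ⟨K₁, hK₁⟩ := hU₁b
  obtain ⟨K₂, hK₂⟩ := hU₂b
  have hc : (0:ℝ) < η - ηhat := sub_pos.2 hηη
  set q : ℝ := C₁ * C₂ * Real.exp (η * M) / (η - ηhat) with hqdef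
  set S : ℝ := ⨆ x ∈ Set.Iic M, ‖U₁ x - U₂ x‖ with hSdef
  have hSnn : 0 ≤ S :=
    Real.iSup_nonneg fun x => Real.iSup_nonneg fun _ => norm_nonneg _
  have hqnn : 0 ≤ q := by positivity
  -- the family is bounded above
  have hbdd : BddAbove (Set.range fun x => ⨆ _ : x ∈ Set.Iic M, ‖U₁ x - U₂ x‖) := by
    refine ⟨max 0 (K₁ + K₂), ?_⟩
    rintro _ ⟨x, rfl⟩
    dsimp only
    by_cases hx : x ∈ Set.Iic M
    · rw [ciSup_pos hx]
      exact le_max_of_le_right ((norm_sub_le _ _).trans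
        (add_le_add (hK₁ x hx) (hK₂ x hx)))
    · haveI : IsEmpty (x ∈ Set.Iic M) := ⟨hx⟩
      rw [Real.iSup_of_isEmpty]
      exact le_max_left _ _
  have hle : ∀ y ∈ Set.Iic M, ‖U₁ y - U₂ y‖ ≤ S := by
    intro y hy
    rw [← ciSup_pos (f := fun _ : y ∈ Set.Iic M => ‖U₁ y - U₂ y‖) hy]
    exact le_ciSup hbdd y
  -- isometry of toEuclideanCLM
  have hiso : Isometry (fun A : Matrix (Fin n) (Fin n) ℂ =>
      Matrix.toEuclideanCLM (𝕜 := ℂ) A) := by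
    refine Isometry.of_dist_eq fun A A' => ?_
    rw [dist_eq_norm, dist_eq_norm, ← map_sub, ← Matrix.cstar_norm_def]
  have key : ∀ x ∈ Set.Iic M, ‖N U₁ x - N U₂ x‖ ≤ q * S := by
    intro x hx
    set T : ℝ → EuclideanSpace ℂ (Fin n) →L[ℂ] EuclideanSpace ℂ (Fin n) :=
      fun y => Matrix.toEuclideanCLM (𝕜 := ℂ)
        (NormedSpace.exp (((x - y : ℝ) : ℂ) • B) * Emat y) with hTdef
    have hTnorm : ∀ y, y ≤ x →
        ‖T y‖ ≤ (C₁ * C₂ * Real.exp (ηhat * x)) * Real.exp ((η - ηhat) * y) := by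
      intro y hy
      have h1 : ‖T y‖ = ‖NormedSpace.exp (((x - y : ℝ) : ℂ) • B) * Emat y‖ :=
        (Matrix.cstar_norm_def _).symm
      rw [h1]
      calc ‖NormedSpace.exp (((x - y : ℝ) : ℂ) • B) * Emat y‖
          ≤ ‖NormedSpace.exp (((x - y : ℝ) : ℂ) • B)‖ * ‖Emat y‖ :=
            Matrix.l2_opNorm_mul _ _
        _ ≤ (C₁ * Real.exp (ηhat * (x - y))) * (C₂ * Real.exp (η * y)) := by
            apply mul_le_mul (hB _ (sub_nonneg.2 hy)) (hEbnd y (hy.trans hx))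
              (norm_nonneg _) (by positivity)
        _ = (C₁ * C₂ * Real.exp (ηhat * x)) * Real.exp ((η - ηhat) * y) := by
            rw [mul_mul_mul_comm, ← Real.exp_add, mul_assoc (C₁ * C₂), ← Real.exp_add,
              show ηhat * (x - y) + η * y = ηhat * x + (η - ηhat) * y by ring]
    have hTcont : Continuous T := by
      apply hiso.continuous.comp
      letI : NormedAlgebra ℚ (Matrix (Fin n) (Fin n) ℂ) := NormedAlgebra.restrictScalars ℚ ℂ _
      exact ((NormedSpace.exp_continuous).comp
        ((Complex.continuous_ofReal.comp (continuous_const.sub continuous_id)).smul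
          continuous_const)).mul hEcont
    -- integrability of the integrands
    have hint : ∀ (U : ℝ → EuclideanSpace ℂ (Fin n)), ContinuousOn U (Set.Iic M) →
        ∀ K : ℝ, (∀ z ≤ M, ‖U z‖ ≤ K) →
        MeasureTheory.IntegrableOn (fun y => T y (U y)) (Set.Iic x) := by
      intro U hUc K hK
      have hKnn : 0 ≤ K := (norm_nonneg _).trans (hK M le_rfl)
      have hcont : ContinuousOn (fun y => T y (U y)) (Set.Iic x) :=
        (hTcont.continuousOn).clm_apply (hUc.mono (Set.Iic_subset_Iic.2 hx))
      refine MeasureTheory.Integrable.mono'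
        (((integrableOn_exp_mul_Iic' hc x).const_mul (C₁ * C₂ * Real.exp (ηhat * x) * K)))
        (hcont.aestronglyMeasurable measurableSet_Iic) ?_
      rw [MeasureTheory.ae_restrict_iff' measurableSet_Iic]
      refine Filter.Eventually.of_forall fun y hy => ?_
      calc ‖T y (U y)‖ ≤ ‖T y‖ * ‖U y‖ := (T y).le_opNorm _
        _ ≤ ((C₁ * C₂ * Real.exp (ηhat * x)) * Real.exp ((η - ηhat) * y)) * K :=
            mul_le_mul (hTnorm y hy) (hK y (le_trans hy hx)) (norm_nonneg _)
              (by positivity)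
        _ = C₁ * C₂ * Real.exp (ηhat * x) * K * Real.exp ((η - ηhat) * y) := by ring
    have hint₁ := hint U₁ hU₁c K₁ hK₁
    have hint₂ := hint U₂ hU₂c K₂ hK₂
    rw [hN, hN, add_sub_add_left_eq_sub, ← MeasureTheory.integral_sub hint₁ hint₂]
    have hrw : ∀ y : ℝ, T y (U₁ y) - T y (U₂ y) = T y (U₁ y - U₂ y) := fun y =>
      (map_sub (T y) _ _).symm
    calc ‖∫ y in Set.Iic x, (T y (U₁ y) - T y (U₂ y))‖
        ≤ ∫ y in Set.Iic x,
            (C₁ * C₂ * Real.exp (ηhat * x) * S) * Real.exp ((η - ηhat) * y) := by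
          refine MeasureTheory.norm_integral_le_of_norm_le
            ((integrableOn_exp_mul_Iic' hc x).const_mul _) ?_
          rw [MeasureTheory.ae_restrict_iff' measurableSet_Iic]
          refine Filter.Eventually.of_forall fun y hy => ?_
          rw [hrw y]
          calc ‖T y (U₁ y - U₂ y)‖ ≤ ‖T y‖ * ‖U₁ y - U₂ y‖ := (T y).le_opNorm _
            _ ≤ ((C₁ * C₂ * Real.exp (ηhat * x)) * Real.exp ((η - ηhat) * y)) * S :=
                mul_le_mul (hTnorm y hy) (hle y (Set.mem_Iic.2 (le_trans hy hx))) (norm_nonneg _)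
                  (by positivity)
            _ = C₁ * C₂ * Real.exp (ηhat * x) * S * Real.exp ((η - ηhat) * y) := by
                ring
      _ = (C₁ * C₂ * Real.exp (ηhat * x) * S) * (Real.exp ((η - ηhat) * x) / (η - ηhat)) := by
          rw [MeasureTheory.integral_const_mul, integral_exp_mul_Iic' hc x]
      _ = (C₁ * C₂ * Real.exp (η * x) / (η - ηhat)) * S := by
          rw [show (η : ℝ) * x = ηhat * x + (η - ηhat) * x by ring, Real.exp_add]
          ring
      _ ≤ q * S := by
          refine mul_le_mul_of_nonneg_right ?_ hSnn
          rw [hqdef]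
          gcongr
          exact hx
  refine Real.iSup_le (fun x => Real.iSup_le (fun hx => key x hx) ?_) ?_
  · exact mul_nonneg hqnn hSnn
  · exact mul_nonneg hqnn hSnn
end

section
/- Let n ≥ 1, let B be an n×n complex matrix, let C₁, C₂ > 0, let η̂ < η be real numbers with η > 0, and let M ∈ ℝ. Assume ‖exp(tB)‖ ≤ C₁e^{η̂ t} for all t ≥ 0, and let E : ℝ → (n×n complex matrices) be continuous with ‖E(y)‖ ≤ C₂e^{η y} for all y ≤ M. Fix V₋ ∈ ℂⁿ and define, for bounded continuous U : (−∞, M] → ℂⁿ, N(U)(x) = V₋ + ∫_{−∞}^{x} exp((x−y)B) E(y) U(y) dy. Set q = C₁C₂ e^{ηM}/(η − η̂) and assume q < 1. Then N has a unique fixed point U* among bounded continuous functions on (−∞, M], and it satisfies sup_{x ≤ M} ‖U*(x) − V₋‖ ≤ (q/(1−q)) ‖V₋‖. -/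
open scoped Matrix.Norms.L2Operator

namespace DuhamelFPAux

open MeasureTheory Set

lemma exp_kmul_hasDerivAt {κ : ℝ} (hκ : 0 < κ) (y : ℝ) :
    HasDerivAt (fun t => Real.exp (κ * t) / κ) (Real.exp (κ * y)) y := by
  have h1 : HasDerivAt (fun t : ℝ => κ * t) κ y := by
    simpa using (hasDerivAt_id y).const_mul κ
  have h3 := h1.exp.div_const κ
  simpa [mul_div_assoc, mul_div_cancel_right₀ _ hκ.ne'] using h3

lemma exp_kmul_integrableOn_Iic {κ : ℝ} (hκ : 0 < κ) (x : ℝ) :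
    IntegrableOn (fun y => Real.exp (κ * y)) (Iic x) := by
  refine integrableOn_Iic_of_intervalIntegral_norm_bounded
    (l := Filter.atBot) (a := fun i : ℝ => i)
    (Real.exp (κ * x) / κ) x
    (fun i => (Real.continuous_exp.comp (continuous_const.mul continuous_id)).integrableOn_Ioc)
    Filter.tendsto_id ?_
  filter_upwards with i
  have hval : (∫ y in i..x, ‖Real.exp (κ * y)‖) = Real.exp (κ * x) / κ - Real.exp (κ * i) / κ := by
    have h : (∫ y in i..x, ‖Real.exp (κ * y)‖) = ∫ y in i..x, Real.exp (κ * y) := by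
      congr 1; ext y; exact Real.norm_of_nonneg (Real.exp_pos _).le
    rw [h]
    exact intervalIntegral.integral_eq_sub_of_hasDerivAt (fun y _ => exp_kmul_hasDerivAt hκ y)
      ((Real.continuous_exp.comp (continuous_const.mul continuous_id)).intervalIntegrable _ _)
  rw [hval]
  have h2 : 0 ≤ Real.exp (κ * i) / κ := by positivity
  linarith

lemma exp_kmul_integral_Iic {κ : ℝ} (hκ : 0 < κ) (x : ℝ) :
    (∫ y in Iic x, Real.exp (κ * y)) = Real.exp (κ * x) / κ := by
  have htend : Filter.Tendsto (fun t => Real.exp (κ * t) / κ) Filter.atBot (nhds 0) := by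
    have h1 : Filter.Tendsto (fun t : ℝ => κ * t) Filter.atBot Filter.atBot :=
      Filter.Tendsto.const_mul_atBot hκ Filter.tendsto_id
    have := (Real.tendsto_exp_atBot.comp h1).div_const κ
    simpa using this
  have := integral_Iic_of_hasDerivAt_of_tendsto' (fun y _ => exp_kmul_hasDerivAt hκ y)
    (exp_kmul_integrableOn_Iic hκ x) htend
  simpa using this

variable {n : ℕ}

lemma toCLM_norm (A : Matrix (Fin n) (Fin n) ℂ) :
    ‖(Matrix.toEuclideanCLM (𝕜 := ℂ) A :
        EuclideanSpace ℂ (Fin n) →L[ℂ] EuclideanSpace ℂ (Fin n))‖ = ‖A‖ :=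
  (Matrix.cstar_norm_def A).symm

lemma toCLM_continuous :
    Continuous (fun A : Matrix (Fin n) (Fin n) ℂ => (Matrix.toEuclideanCLM (𝕜 := ℂ) A :
      EuclideanSpace ℂ (Fin n) →L[ℂ] EuclideanSpace ℂ (Fin n))) :=
  (AddMonoidHomClass.isometry_of_norm (Matrix.toEuclideanCLM (𝕜 := ℂ)) toCLM_norm).continuous

lemma exp_cont (B : Matrix (Fin n) (Fin n) ℂ) :
    Continuous (fun x : ℝ => NormedSpace.exp ((x : ℂ) • B)) := by
  haveI : NormedAlgebra ℚ (Matrix (Fin n) (Fin n) ℂ) := NormedAlgebra.restrictScalars ℚ ℂ _; exact NormedSpace.exp_continuous.comp ((Complex.continuous_ofReal).smul continuous_const)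

lemma exp_fac (B : Matrix (Fin n) (Fin n) ℂ) (x y : ℝ) :
    NormedSpace.exp (((x - y : ℝ) : ℂ) • B) =
      NormedSpace.exp ((x : ℂ) • B) * NormedSpace.exp (((-y : ℝ) : ℂ) • B) := by
  rw [← Matrix.exp_add_of_commute _ _ (((Commute.refl B).smul_left _).smul_right _)]
  congr 1
  push_cast
  rw [← add_smul, sub_eq_add_neg]

/-- The Duhamel kernel as a continuous linear map. -/
noncomputable def Kop (B : Matrix (Fin n) (Fin n) ℂ) (Emat : ℝ → Matrix (Fin n) (Fin n) ℂ)
    (x y : ℝ) : EuclideanSpace ℂ (Fin n) →L[ℂ] EuclideanSpace ℂ (Fin n) :=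
  Matrix.toEuclideanCLM (𝕜 := ℂ) (NormedSpace.exp (((x - y : ℝ) : ℂ) • B) * Emat y)

variable {B : Matrix (Fin n) (Fin n) ℂ} {Emat : ℝ → Matrix (Fin n) (Fin n) ℂ}
  {C₁ C₂ ηhat η M : ℝ}

lemma Kop_cont (hEcont : Continuous Emat) (x : ℝ)
    {W : ℝ → EuclideanSpace ℂ (Fin n)} (hW : Continuous W) :
    Continuous (fun y => Kop B Emat x y (W y)) := by
  refine Continuous.clm_apply (toCLM_continuous.comp ?_) hW
  haveI : NormedAlgebra ℚ (Matrix (Fin n) (Fin n) ℂ) := NormedAlgebra.restrictScalars ℚ ℂ _; exact (NormedSpace.exp_continuous.comp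
    (((Complex.continuous_ofReal.comp (continuous_const.sub continuous_id)).smul
      continuous_const))).mul hEcont

/-- Main integrability-and-bound lemma. -/
lemma integral_bound
    (hC₁ : 0 < C₁) (hC₂ : 0 < C₂) (hηη : ηhat < η) (hη : 0 < η)
    (hB : ∀ t : ℝ, 0 ≤ t → ‖NormedSpace.exp ((t : ℂ) • B)‖ ≤ C₁ * Real.exp (ηhat * t))
    (hEcont : Continuous Emat)
    (hEbnd : ∀ y : ℝ, y ≤ M → ‖Emat y‖ ≤ C₂ * Real.exp (η * y))
    (W : ℝ → EuclideanSpace ℂ (Fin n)) (hW : Continuous W)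
    (c : ℝ) (hc : ∀ y ≤ M, ‖W y‖ ≤ c)
    (x : ℝ) (hx : x ≤ M) :
    IntegrableOn (fun y => Kop B Emat x y (W y)) (Iic x) ∧
    ‖∫ y in Iic x, Kop B Emat x y (W y)‖ ≤ C₁ * C₂ * Real.exp (η * M) / (η - ηhat) * c := by
  have hκ : (0:ℝ) < η - ηhat := sub_pos.2 hηη
  have hc0 : 0 ≤ c := le_trans (norm_nonneg (W M)) (hc M le_rfl)
  have hbd : ∀ᵐ y ∂(volume.restrict (Iic x)),
      ‖Kop B Emat x y (W y)‖ ≤ (C₁ * C₂ * Real.exp (ηhat * x) * c) * Real.exp ((η - ηhat) * y) := by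
    filter_upwards [ae_restrict_mem measurableSet_Iic] with y hy
    have hy' : (y:ℝ) ≤ x := hy
    have hyM : y ≤ M := le_trans hy' hx
    have h1 : ‖Kop B Emat x y (W y)‖ ≤
        ‖NormedSpace.exp (((x - y : ℝ) : ℂ) • B) * Emat y‖ * ‖W y‖ := by
      rw [← toCLM_norm]
      exact ContinuousLinearMap.le_opNorm _ _
    have h2 : ‖NormedSpace.exp (((x - y : ℝ) : ℂ) • B) * Emat y‖ ≤
        (C₁ * Real.exp (ηhat * (x - y))) * (C₂ * Real.exp (η * y)) :=
      le_trans (norm_mul_le _ _)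
        (mul_le_mul (hB _ (sub_nonneg.2 hy')) (hEbnd y hyM) (norm_nonneg _) (by positivity))
    calc ‖Kop B Emat x y (W y)‖
        ≤ ((C₁ * Real.exp (ηhat * (x - y))) * (C₂ * Real.exp (η * y))) * c :=
          le_trans h1 (mul_le_mul h2 (hc y hyM) (norm_nonneg _) (by positivity))
      _ = (C₁ * C₂ * Real.exp (ηhat * x) * c) * Real.exp ((η - ηhat) * y) := by
          rw [show (C₁ * Real.exp (ηhat * (x - y))) * (C₂ * Real.exp (η * y)) * c
              = C₁ * C₂ * c * (Real.exp (ηhat * (x - y)) * Real.exp (η * y)) from by ring,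
            ← Real.exp_add, show ηhat * (x - y) + η * y = ηhat * x + (η - ηhat) * y from by ring,
            Real.exp_add]
          ring
  have hgint : Integrable
      (fun y => (C₁ * C₂ * Real.exp (ηhat * x) * c) * Real.exp ((η - ηhat) * y))
      (volume.restrict (Iic x)) := (exp_kmul_integrableOn_Iic hκ x).const_mul _
  have hint : IntegrableOn (fun y => Kop B Emat x y (W y)) (Iic x) :=
    Integrable.mono' hgint ((Kop_cont hEcont x hW).aestronglyMeasurable.restrict) hbd
  refine ⟨hint, ?_⟩
  calc ‖∫ y in Iic x, Kop B Emat x y (W y)‖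
      ≤ ∫ y in Iic x, (C₁ * C₂ * Real.exp (ηhat * x) * c) * Real.exp ((η - ηhat) * y) :=
        norm_integral_le_of_norm_le hgint hbd
    _ = (C₁ * C₂ * Real.exp (ηhat * x) * c) * (Real.exp ((η - ηhat) * x) / (η - ηhat)) := by
        rw [MeasureTheory.integral_const_mul, exp_kmul_integral_Iic hκ x]
    _ = C₁ * C₂ * Real.exp (η * x) / (η - ηhat) * c := by
        rw [show (C₁ * C₂ * Real.exp (ηhat * x) * c) * (Real.exp ((η - ηhat) * x) / (η - ηhat))
            = C₁ * C₂ * (Real.exp (ηhat * x) * Real.exp ((η - ηhat) * x)) / (η - ηhat) * c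
            from by ring, ← Real.exp_add,
          show ηhat * x + (η - ηhat) * x = η * x from by ring]
    _ ≤ C₁ * C₂ * Real.exp (η * M) / (η - ηhat) * c := by
        gcongr

/-- Continuity of the Duhamel integral on `(-∞, M]`. -/
lemma duhamel_contOn
    (hC₁ : 0 < C₁) (hC₂ : 0 < C₂) (hηη : ηhat < η)
    (hB : ∀ t : ℝ, 0 ≤ t → ‖NormedSpace.exp ((t : ℂ) • B)‖ ≤ C₁ * Real.exp (ηhat * t))
    (hEcont : Continuous Emat)
    (hEbnd : ∀ y : ℝ, y ≤ M → ‖Emat y‖ ≤ C₂ * Real.exp (η * y))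
    (U : ℝ → EuclideanSpace ℂ (Fin n)) (hU : Continuous U)
    (c : ℝ) (hc : ∀ y, ‖U y‖ ≤ c) :
    ContinuousOn (fun x => ∫ y in Iic x, Kop B Emat x y (U y)) (Iic M) := by
  have hκ : (0:ℝ) < η - ηhat := sub_pos.2 hηη
  have hc0 : 0 ≤ c := le_trans (norm_nonneg _) (hc 0)
  set G : ℝ → EuclideanSpace ℂ (Fin n) := fun y =>
    (Matrix.toEuclideanCLM (𝕜 := ℂ)
      (NormedSpace.exp (((-y : ℝ) : ℂ) • B) * Emat y)) (U y) with hGdef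
  have hGcont : Continuous G := by
    refine Continuous.clm_apply (toCLM_continuous.comp ?_) hU
    haveI : NormedAlgebra ℚ (Matrix (Fin n) (Fin n) ℂ) := NormedAlgebra.restrictScalars ℚ ℂ _; exact (NormedSpace.exp_continuous.comp
      (((Complex.continuous_ofReal.comp continuous_neg).smul continuous_const))).mul hEcont
  have hGint : ∀ x, x ≤ M → IntegrableOn G (Iic x) := by
    intro x hx
    have h1 : IntegrableOn G (Iic (min x 0)) := by
      refine Integrable.mono'
        ((exp_kmul_integrableOn_Iic hκ (min x 0)).const_mul (C₁ * C₂ * c))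
        (hGcont.aestronglyMeasurable.restrict) ?_
      filter_upwards [ae_restrict_mem measurableSet_Iic] with y hy
      have hy0 : y ≤ 0 := le_trans hy (min_le_right _ _)
      have hyM : y ≤ M := le_trans (le_trans hy (min_le_left _ _)) hx
      have h1 : ‖G y‖ ≤ ‖NormedSpace.exp (((-y : ℝ) : ℂ) • B) * Emat y‖ * ‖U y‖ := by
        rw [hGdef, ← toCLM_norm]
        exact ContinuousLinearMap.le_opNorm _ _
      have h2 : ‖NormedSpace.exp (((-y : ℝ) : ℂ) • B) * Emat y‖ ≤
          (C₁ * Real.exp (ηhat * (-y))) * (C₂ * Real.exp (η * y)) :=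
        le_trans (norm_mul_le _ _)
          (mul_le_mul (hB (-y) (by linarith)) (hEbnd y hyM) (norm_nonneg _) (by positivity))
      calc ‖G y‖ ≤ ((C₁ * Real.exp (ηhat * (-y))) * (C₂ * Real.exp (η * y))) * c :=
            le_trans h1 (mul_le_mul h2 (hc y) (norm_nonneg _) (by positivity))
        _ = C₁ * C₂ * c * Real.exp ((η - ηhat) * y) := by
            rw [show (C₁ * Real.exp (ηhat * (-y))) * (C₂ * Real.exp (η * y)) * c
                = C₁ * C₂ * c * (Real.exp (ηhat * (-y)) * Real.exp (η * y)) from by ring,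
              ← Real.exp_add, show ηhat * (-y) + η * y = (η - ηhat) * y from by ring]
    have h2 : IntegrableOn G (Icc (min x 0) x) := hGcont.integrableOn_Icc
    refine (h1.union h2).mono_set ?_
    intro y hy
    rcases le_total y (min x 0) with h | h
    · exact mem_union_left _ h
    · exact mem_union_right _ ⟨h, hy⟩
  have hfac : ∀ x y : ℝ, (Kop B Emat x y) (U y) =
      (Matrix.toEuclideanCLM (𝕜 := ℂ) (NormedSpace.exp ((x : ℂ) • B))) (G y) := by
    intro x y
    rw [hGdef]
    simp only [Kop]
    rw [exp_fac B x y, mul_assoc, map_mul, ContinuousLinearMap.mul_apply]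
  have hrepr : ∀ x ∈ Iic M, (∫ y in Iic x, Kop B Emat x y (U y)) =
      (Matrix.toEuclideanCLM (𝕜 := ℂ) (NormedSpace.exp ((x : ℂ) • B)))
        (∫ y in Iic x, G y) := by
    intro x hx
    simp_rw [hfac]
    exact ContinuousLinearMap.integral_comp_comm _ (hGint x hx)
  have hprim : Continuous (fun x => ∫ t in (M : ℝ)..x, G t) :=
    intervalIntegral.continuous_primitive (fun a b => hGcont.intervalIntegrable a b) M
  have hFcont : ContinuousOn (fun x => ∫ y in Iic x, G y) (Iic M) := by
    refine (Continuous.continuousOn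
      (f := fun x : ℝ => (∫ y in Iic M, G y) + ∫ t in (M:ℝ)..x, G t)
      ((continuous_const).add hprim)).congr ?_
    intro x hx
    have h := intervalIntegral.integral_Iic_sub_Iic (hGint x hx) (hGint M le_rfl)
    show (∫ y in Iic x, G y) = (∫ y in Iic M, G y) + ∫ t in (M:ℝ)..x, G t
    rw [intervalIntegral.integral_symm x M, ← h]
    abel
  have hA : Continuous (fun x : ℝ =>
      (Matrix.toEuclideanCLM (𝕜 := ℂ) (NormedSpace.exp ((x : ℂ) • B)) :
        EuclideanSpace ℂ (Fin n) →L[ℂ] EuclideanSpace ℂ (Fin n))) :=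
    toCLM_continuous.comp (exp_cont B)
  exact (hA.continuousOn.clm_apply hFcont).congr hrepr

end DuhamelFPAux

/-- Fixed point of the Duhamel operator: if `q = C₁C₂ e^{ηM}/(η − η̂) < 1`, then
`N(U)(x) = V₋ + ∫_{−∞}^x exp((x−y)B) E(y) U(y) dy` has a unique fixed point `U*` among
bounded continuous functions on `(−∞, M]`, and `sup_{x ≤ M} ‖U*(x) − V₋‖ ≤ (q/(1−q))‖V₋‖`.
All norms are Euclidean (ℓ²) norms. -/
theorem duhamel_fixed_point
    (n : ℕ) (hn : 1 ≤ n)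
    (B : Matrix (Fin n) (Fin n) ℂ)
    (C₁ C₂ : ℝ) (hC₁ : 0 < C₁) (hC₂ : 0 < C₂)
    (ηhat η : ℝ) (hηη : ηhat < η) (hη : 0 < η)
    (M : ℝ)
    (hB : ∀ t : ℝ, 0 ≤ t → ‖NormedSpace.exp ((t : ℂ) • B)‖ ≤ C₁ * Real.exp (ηhat * t))
    (Emat : ℝ → Matrix (Fin n) (Fin n) ℂ)
    (hEcont : Continuous Emat)
    (hEbnd : ∀ y : ℝ, y ≤ M → ‖Emat y‖ ≤ C₂ * Real.exp (η * y))
    (Vm : EuclideanSpace ℂ (Fin n))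
    (N : (ℝ → EuclideanSpace ℂ (Fin n)) → ℝ → EuclideanSpace ℂ (Fin n))
    (hN : ∀ (U : ℝ → EuclideanSpace ℂ (Fin n)) (x : ℝ),
      N U x = Vm + ∫ y in Set.Iic x,
        (Matrix.toEuclideanCLM (𝕜 := ℂ)
          (NormedSpace.exp (((x - y : ℝ) : ℂ) • B) * Emat y)) (U y))
    (q : ℝ) (hq : q = C₁ * C₂ * Real.exp (η * M) / (η - ηhat)) (hq1 : q < 1) :
    ∃ U : ℝ → EuclideanSpace ℂ (Fin n),
      ContinuousOn U (Set.Iic M) ∧ (∃ C, ∀ x ≤ M, ‖U x‖ ≤ C) ∧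
      (∀ x ≤ M, N U x = U x) ∧
      (∀ x ≤ M, ‖U x - Vm‖ ≤ q / (1 - q) * ‖Vm‖) ∧
      ∀ U' : ℝ → EuclideanSpace ℂ (Fin n),
        ContinuousOn U' (Set.Iic M) → (∃ C, ∀ x ≤ M, ‖U' x‖ ≤ C) →
        (∀ x ≤ M, N U' x = U' x) → ∀ x ≤ M, U' x = U x := by
  classical
  open MeasureTheory Set DuhamelFPAux in
  have hκ : (0:ℝ) < η - ηhat := sub_pos.2 hηη
  have hq0 : 0 < q := by
    rw [hq]; exact div_pos (by positivity) hκ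
  have hq1' : (0:ℝ) < 1 - q := by linarith
  -- Duhamel formula in terms of `Kop`
  have hN' : ∀ (U : ℝ → EuclideanSpace ℂ (Fin n)) (x : ℝ),
      N U x = Vm + ∫ y in Set.Iic x, DuhamelFPAux.Kop B Emat x y (U y) := hN
  -- the key bound specialized
  have hIB := fun (W : ℝ → EuclideanSpace ℂ (Fin n)) (hW : Continuous W) (c : ℝ)
      (hc : ∀ y ≤ M, ‖W y‖ ≤ c) (x : ℝ) (hx : x ≤ M) =>
    DuhamelFPAux.integral_bound hC₁ hC₂ hηη hη hB hEcont hEbnd W hW c hc x hx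
  -- norm of `N f x - Vm`
  have hNoff : ∀ (W : ℝ → EuclideanSpace ℂ (Fin n)), Continuous W → ∀ c : ℝ,
      (∀ y ≤ M, ‖W y‖ ≤ c) → ∀ x ≤ M, ‖N W x - Vm‖ ≤ q * c := by
    intro W hW c hc x hx
    rw [hN' W x, add_sub_cancel_left, hq]
    exact (hIB W hW c hc x hx).2
  -- continuity of `N f` on `Iic M` for continuous globally bounded `f`
  have hNcont : ∀ (W : ℝ → EuclideanSpace ℂ (Fin n)), Continuous W → ∀ c : ℝ,
      (∀ y, ‖W y‖ ≤ c) → ContinuousOn (fun x => N W x) (Set.Iic M) := by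
    intro W hW c hc
    have hfun : (fun x => N W x) =
        fun x => Vm + ∫ y in Set.Iic x, DuhamelFPAux.Kop B Emat x y (W y) := funext (hN' W)
    rw [hfun]
    exact continuousOn_const.add
      (DuhamelFPAux.duhamel_contOn hC₁ hC₂ hηη hB hEcont hEbnd W hW c hc)
  -- the operator on bounded continuous functions
  have Tcont : ∀ f : BoundedContinuousFunction ℝ (EuclideanSpace ℂ (Fin n)),
      Continuous (fun x => N f (min x M)) := by
    intro f
    exact (hNcont f f.continuous ‖f‖ f.norm_coe_le_norm).comp_continuous
      (continuous_id.min continuous_const) (fun x => min_le_right x M)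
  have Tbnd : ∀ f : BoundedContinuousFunction ℝ (EuclideanSpace ℂ (Fin n)),
      ∀ x : ℝ, ‖N f (min x M)‖ ≤ ‖Vm‖ + q * ‖f‖ := by
    intro f x
    have h := hNoff f f.continuous ‖f‖ (fun y _ => f.norm_coe_le_norm y)
      (min x M) (min_le_right x M)
    calc ‖N f (min x M)‖ = ‖Vm + (N f (min x M) - Vm)‖ := by rw [add_sub_cancel]
      _ ≤ ‖Vm‖ + ‖N f (min x M) - Vm‖ := norm_add_le _ _
      _ ≤ ‖Vm‖ + q * ‖f‖ := by linarith
  set T : BoundedContinuousFunction ℝ (EuclideanSpace ℂ (Fin n)) →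
      BoundedContinuousFunction ℝ (EuclideanSpace ℂ (Fin n)) := fun f =>
    BoundedContinuousFunction.ofNormedAddCommGroup (fun x => N f (min x M))
      (Tcont f) (‖Vm‖ + q * ‖f‖) (Tbnd f) with hTdef
  have hTapp : ∀ f x, T f x = N f (min x M) := fun f x => rfl
  -- subtraction identity
  have hTsub : ∀ f g : BoundedContinuousFunction ℝ (EuclideanSpace ℂ (Fin n)),
      ∀ x : ℝ, x ≤ M → N f x - N g x =
        ∫ y in Set.Iic x, DuhamelFPAux.Kop B Emat x y (f y - g y) := by
    intro f g x hx
    rw [hN' f x, hN' g x]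
    have h1 := (hIB f f.continuous ‖f‖ (fun y _ => f.norm_coe_le_norm y) x hx).1
    have h2 := (hIB g g.continuous ‖g‖ (fun y _ => g.norm_coe_le_norm y) x hx).1
    rw [show ∀ a b c : EuclideanSpace ℂ (Fin n), a + b - (a + c) = b - c from
      fun a b c => by abel]
    rw [← integral_sub h1 h2]
    congr 1
    ext y
    rw [← map_sub]
  -- Lipschitz
  have hlip : LipschitzWith q.toNNReal T := by
    refine LipschitzWith.of_dist_le_mul ?_
    intro f g
    rw [Real.coe_toNNReal q hq0.le]
    rw [BoundedContinuousFunction.dist_le (by positivity)]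
    intro x
    rw [dist_eq_norm, hTapp, hTapp, hTsub f g (min x M) (min_le_right x M)]
    have hcsub : ∀ y ≤ M, ‖f y - g y‖ ≤ dist f g := by
      intro y _
      rw [← dist_eq_norm]
      exact BoundedContinuousFunction.dist_coe_le_dist y
    have := (hIB (fun y => f y - g y) (f.continuous.sub g.continuous) (dist f g) hcsub
      (min x M) (min_le_right x M)).2
    rw [hq]
    exact this
  have hK1 : q.toNNReal < 1 := by
    rw [← NNReal.coe_lt_coe, Real.coe_toNNReal q hq0.le]
    exact hq1
  have hT : ContractingWith q.toNNReal T := ⟨hK1, hlip⟩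
  set Ustar := hT.fixedPoint T with hUdef
  have hfp : T Ustar = Ustar := hT.fixedPoint_isFixedPt
  have hfix : ∀ x ≤ M, N (⇑Ustar) x = Ustar x := by
    intro x hx
    calc N (⇑Ustar) x = N (⇑Ustar) (min x M) := by rw [min_eq_left hx]
      _ = T Ustar x := (hTapp Ustar x).symm
      _ = Ustar x := by rw [hfp]
  -- distance bound
  have hdist : ∀ x ≤ M, ‖Ustar x - Vm‖ ≤ q / (1 - q) * ‖Vm‖ := by
    intro x hx
    have hconst : dist (BoundedContinuousFunction.const ℝ Vm)
        (T (BoundedContinuousFunction.const ℝ Vm)) ≤ q * ‖Vm‖ := by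
      rw [BoundedContinuousFunction.dist_le (by positivity)]
      intro z
      rw [dist_eq_norm, hTapp, norm_sub_rev]
      exact hNoff (fun _ => Vm) continuous_const ‖Vm‖ (fun y _ => le_rfl)
        (min z M) (min_le_right z M)
    have h1 : ‖Ustar x - Vm‖ ≤ dist (BoundedContinuousFunction.const ℝ Vm) Ustar := by
      rw [dist_comm]
      exact le_trans (le_of_eq (dist_eq_norm (Ustar x) Vm).symm)
        (BoundedContinuousFunction.dist_coe_le_dist
          (f := Ustar) (g := BoundedContinuousFunction.const ℝ Vm) x)
    have h2 := hT.dist_fixedPoint_le (BoundedContinuousFunction.const ℝ Vm)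
    rw [Real.coe_toNNReal q hq0.le] at h2
    have h3 : dist (BoundedContinuousFunction.const ℝ Vm)
        (T (BoundedContinuousFunction.const ℝ Vm)) / (1 - q) ≤ q * ‖Vm‖ / (1 - q) :=
      div_le_div_of_nonneg_right hconst hq1'.le
    calc ‖Ustar x - Vm‖ ≤ dist (BoundedContinuousFunction.const ℝ Vm) Ustar := h1
      _ ≤ dist (BoundedContinuousFunction.const ℝ Vm)
          (T (BoundedContinuousFunction.const ℝ Vm)) / (1 - q) := h2
      _ ≤ q * ‖Vm‖ / (1 - q) := h3
      _ = q / (1 - q) * ‖Vm‖ := by ring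
  refine ⟨⇑Ustar, Ustar.continuous.continuousOn, ⟨‖Ustar‖, fun x _ => Ustar.norm_coe_le_norm x⟩,
    hfix, hdist, ?_⟩
  -- uniqueness
  intro U' hU'cont ⟨C, hC⟩ hU'fix
  have hU''cont : Continuous (fun x => U' (min x M)) :=
    hU'cont.comp_continuous (continuous_id.min continuous_const) (fun x => min_le_right x M)
  set U'' : BoundedContinuousFunction ℝ (EuclideanSpace ℂ (Fin n)) :=
    BoundedContinuousFunction.ofNormedAddCommGroup (fun x => U' (min x M)) hU''cont C
      (fun x => hC (min x M) (min_le_right x M)) with hU''def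
  have hU''app : ∀ x, U'' x = U' (min x M) := fun x => rfl
  have hU''fp : Function.IsFixedPt T U'' := by
    refine BoundedContinuousFunction.ext fun x => ?_
    rw [hTapp]
    have hmin : min x M ≤ M := min_le_right x M
    have heq : N (⇑U'') (min x M) = N U' (min x M) := by
      rw [hN' U'' (min x M), hN' U' (min x M)]
      congr 1
      refine setIntegral_congr_fun measurableSet_Iic ?_
      intro y hy
      have hyM : y ≤ M := le_trans hy hmin
      have hy' : (U'' : ℝ → EuclideanSpace ℂ (Fin n)) y = U' y := by
        rw [hU''app, min_eq_left hyM]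
      simp only [hy']
    rw [heq, hU'fix (min x M) hmin, hU''app]
  have hUeq : U'' = Ustar := hT.fixedPoint_unique hU''fp
  intro x hx
  calc U' x = U'' x := by rw [hU''app, min_eq_left hx]
    _ = Ustar x := by rw [hUeq]
end

section
/- Let n ≥ 1, let B be an n×n complex matrix with ‖exp(tB)‖ ≤ C₁ for all t ≥ 0 (some C₁ > 0), and suppose B·V₋ = 0 for a vector V₋ ∈ ℂⁿ. Let E : ℝ → (n×n complex matrices) be continuous with ‖E(y)‖ ≤ C₂e^{η y} for all y ≤ M, where C₂ > 0, η > 0 and M ∈ ℝ. Let V : (−∞, M] → ℂⁿ be a bounded differentiable solution of V′(x) = (B + E(x))V(x) with V(x) → V₋ as x → −∞. Then for every x ≤ M, V(x) = V₋ + ∫_{−∞}^{x} exp((x−y)B) E(y) V(y) dy. -/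
open Filter Topology Set MeasureTheory
open scoped Matrix.Norms.L2Operator

set_option maxHeartbeats 2000000 in
/-- Duhamel-principle identity: a bounded solution of `V′ = (B + E(x))V` on `(−∞, M]`
converging to `V₋` at `−∞`, where `BV₋ = 0`, `‖exp(tB)‖ ≤ C₁` for `t ≥ 0` and
`‖E(y)‖ ≤ C₂ e^{ηy}`, satisfies `V(x) = V₋ + ∫_{−∞}^x exp((x−y)B) E(y) V(y) dy`.
All norms are Euclidean (ℓ²) norms. -/
theorem duhamel_identity
    (n : ℕ) (hn : 1 ≤ n)
    (B : Matrix (Fin n) (Fin n) ℂ)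
    (C₁ : ℝ) (hC₁ : 0 < C₁)
    (hB : ∀ t : ℝ, 0 ≤ t → ‖NormedSpace.exp ((t : ℂ) • B)‖ ≤ C₁)
    (Vm : EuclideanSpace ℂ (Fin n))
    (hVm : Matrix.toEuclideanCLM (𝕜 := ℂ) B Vm = 0)
    (C₂ η M : ℝ) (hC₂ : 0 < C₂) (hη : 0 < η)
    (Emat : ℝ → Matrix (Fin n) (Fin n) ℂ)
    (hEcont : Continuous Emat)
    (hEbnd : ∀ y : ℝ, y ≤ M → ‖Emat y‖ ≤ C₂ * Real.exp (η * y))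
    (V : ℝ → EuclideanSpace ℂ (Fin n))
    (hVbnd : ∃ C, ∀ x ≤ M, ‖V x‖ ≤ C)
    (hVode : ∀ x ≤ M, HasDerivWithinAt V
      (Matrix.toEuclideanCLM (𝕜 := ℂ) (B + Emat x) (V x)) (Set.Iic M) x)
    (hVlim : Tendsto V atBot (𝓝 Vm)) :
    ∀ x ≤ M, V x = Vm + ∫ y in Set.Iic x,
      (Matrix.toEuclideanCLM (𝕜 := ℂ)
        (NormedSpace.exp (((x - y : ℝ) : ℂ) • B) * Emat y)) (V y) := by
  intro x hx
  letI : NormedAlgebra ℚ (Matrix (Fin n) (Fin n) ℂ) :=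
    { (inferInstance : Algebra ℚ (Matrix (Fin n) (Fin n) ℂ)) with
      norm_smul_le := fun q A => by
        rw [← algebraMap_smul ℂ q A]
        exact (norm_smul_le _ _).trans (by simp; rw [← Rat.norm_cast_real, Real.norm_eq_abs]) }
  obtain ⟨C, hC⟩ := hVbnd
  have hC0 : 0 ≤ C := le_trans (norm_nonneg _) (hC M le_rfl)
  -- abbreviations
  have φcont : Continuous (Matrix.toEuclideanCLM (n := Fin n) (𝕜 := ℂ)) :=
    (AddMonoidHomClass.isometry_of_norm (Matrix.toEuclideanCLM (n := Fin n) (𝕜 := ℂ))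
      (fun _ => rfl)).continuous
  set b : EuclideanSpace ℂ (Fin n) →L[ℂ] EuclideanSpace ℂ (Fin n) := Matrix.toEuclideanCLM (𝕜 := ℂ) B with hb
  have hmap : ∀ s : ℂ, Matrix.toEuclideanCLM (𝕜 := ℂ) (NormedSpace.exp (s • B))
      = NormedSpace.exp (s • b) := by
    intro s
    rw [NormedSpace.map_exp _ φcont, _root_.map_smul]
  set A : ℝ → (EuclideanSpace ℂ (Fin n) →L[ℂ] EuclideanSpace ℂ (Fin n)) := fun y => NormedSpace.exp (((x - y : ℝ) : ℂ) • b) with hA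
  -- exp (s • b) fixes Vm
  have hexpVm : ∀ s : ℂ, (NormedSpace.exp (s • b)) Vm = Vm := by
    intro s
    have hsum := NormedSpace.expSeries_summable' (𝕂 := ℂ) (s • b)
    have happ : (NormedSpace.exp (s • b)) Vm
        = ∑' k : ℕ, ((((k.factorial : ℂ))⁻¹ • (s • b) ^ k) Vm) := by
      rw [NormedSpace.exp_eq_tsum ℂ]
      exact ContinuousLinearMap.map_tsum (ContinuousLinearMap.apply ℂ (EuclideanSpace ℂ (Fin n)) Vm) hsum
    rw [happ, tsum_eq_single 0]
    · simp
    · intro k hk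
      obtain ⟨m, rfl⟩ := Nat.exists_eq_succ_of_ne_zero hk
      have h0 : ((s • b) ^ (m + 1)) Vm = 0 := by
        rw [pow_succ, ContinuousLinearMap.mul_apply]
        have : (s • b) Vm = 0 := by
          rw [ContinuousLinearMap.smul_apply, hb, hVm, smul_zero]
        rw [this, map_zero]
      simp [h0]
  -- derivative of A
  have hAder : ∀ y : ℝ, HasDerivAt A (-(A y * b)) y := by
    intro y
    have hc : HasDerivAt (fun y : ℝ => ((x - y : ℝ) : ℂ)) (-1) y := by
      have h1 : HasDerivAt (fun y : ℝ => (y : ℂ)) 1 y := by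
        exact Complex.ofRealCLM.hasDerivAt (x := y)
      have h2 : HasDerivAt (fun y : ℝ => ((x : ℝ) : ℂ) - (y : ℂ)) (0 - 1) y :=
        (hasDerivAt_const (𝕜 := ℝ) y ((x : ℝ) : ℂ)).sub h1
      have hfun : (fun y : ℝ => ((x : ℝ) : ℂ) - (y : ℂ)) = fun y : ℝ => ((x - y : ℝ) : ℂ) := by
        funext y; push_cast; ring
      rw [hfun] at h2
      simpa using h2
    have hg := hasDerivAt_exp_smul_const (𝕂 := ℂ) b (((x - y : ℝ) : ℂ))
    have := HasDerivAt.scomp (x := y) hg hc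
    rw [hA]
    refine HasDerivAt.congr_deriv this ?_
    simp
  -- the integrand
  set g : ℝ → EuclideanSpace ℂ (Fin n) := fun y => (Matrix.toEuclideanCLM (𝕜 := ℂ)
      (NormedSpace.exp (((x - y : ℝ) : ℂ) • B) * Emat y)) (V y) with hg
  have hgA : ∀ y : ℝ, g y = (A y) ((Matrix.toEuclideanCLM (𝕜 := ℂ) (Emat y)) (V y)) := by
    intro y
    rw [hg]
    simp only [map_mul, hmap, ContinuousLinearMap.mul_apply, hA]
  -- derivative of W := fun y => A y (V y) within Iic M
  have hW : ∀ y ∈ Iic M, HasDerivWithinAt (fun y => (A y) (V y)) (g y) (Iic M) y := by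
    intro y hy
    let L : (EuclideanSpace ℂ (Fin n) →L[ℂ] EuclideanSpace ℂ (Fin n)) →L[ℝ]
        (EuclideanSpace ℂ (Fin n) →L[ℝ] EuclideanSpace ℂ (Fin n)) :=
      (ContinuousLinearMap.restrictScalarsIsometry ℂ (EuclideanSpace ℂ (Fin n))
        (EuclideanSpace ℂ (Fin n)) ℝ ℝ).toContinuousLinearMap
    have hAr : HasDerivAt (fun y => L (A y)) (L (-(A y * b))) y :=
      L.hasFDerivAt.comp_hasDerivAt y (hAder y)
    have h2 := hAr.hasDerivWithinAt.clm_apply (hVode y hy)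
    have heq : (L (-(A y * b))) (V y) + (L (A y))
        ((Matrix.toEuclideanCLM (𝕜 := ℂ) (B + Emat y)) (V y)) = g y := by
      have : (Matrix.toEuclideanCLM (𝕜 := ℂ) (B + Emat y))
          = b + Matrix.toEuclideanCLM (𝕜 := ℂ) (Emat y) := by rw [map_add, hb]
      rw [this, hgA y]
      show (-(A y * b)) (V y) + (A y) ((b + Matrix.toEuclideanCLM (𝕜 := ℂ) (Emat y)) (V y)) = _
      simp only [ContinuousLinearMap.neg_apply, ContinuousLinearMap.mul_apply,
        ContinuousLinearMap.add_apply, map_add]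
      abel
    rw [← heq]
    exact h2
  -- norm bounds
  have hAnorm : ∀ y : ℝ, y ≤ x → ‖A y‖ ≤ C₁ := by
    intro y hy
    have h0 : (0 : ℝ) ≤ x - y := by linarith
    have hAy : A y = Matrix.toEuclideanCLM (𝕜 := ℂ)
        (NormedSpace.exp (((x - y : ℝ) : ℂ) • B)) := (hmap _).symm
    rw [hAy]
    exact hB _ h0
  -- integrability of g on Iic x
  have hVcont : ContinuousOn V (Iic M) := fun y hy => (hVode y hy).continuousWithinAt
  have hexpint : IntegrableOn (fun y => Real.exp (η * y)) (Iic x) := by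
    have h1 := integrableOn_exp_Iic (η * x)
    rw [← integrable_indicator_iff measurableSet_Iic] at h1 ⊢
    have h2 := (integrable_comp_mul_left_iff ((Iic (η * x)).indicator Real.exp)
      (ne_of_gt hη)).2 h1
    refine h2.congr (Eventually.of_forall fun y => ?_)
    simp only [indicator_apply, mem_Iic]
    by_cases hy : y ≤ x
    · rw [if_pos (mul_le_mul_of_nonneg_left hy hη.le), if_pos hy]
    · rw [if_neg (fun h => hy (le_of_mul_le_mul_left h hη)), if_neg hy]
  have hgcont : ContinuousOn g (Iic x) := by
    have h1 : Continuous (fun y : ℝ => Matrix.toEuclideanCLM (𝕜 := ℂ)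
        (NormedSpace.exp (((x - y : ℝ) : ℂ) • B) * Emat y)) := by
      apply φcont.comp
      exact Continuous.mul
        (NormedSpace.exp_continuous.comp ((Complex.continuous_ofReal.comp
          (continuous_const.sub continuous_id)).smul continuous_const)) hEcont
    exact h1.continuousOn.clm_apply (hVcont.mono (Iic_subset_Iic.2 hx))
  have hgbnd : ∀ y ∈ Iic x, ‖g y‖ ≤ (C₁ * C₂ * C) * Real.exp (η * y) := by
    intro y hy
    have hyM : y ≤ M := le_trans hy hx
    have h0 : (0 : ℝ) ≤ x - y := by linarith [mem_Iic.1 hy]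
    calc ‖g y‖ ≤ ‖Matrix.toEuclideanCLM (𝕜 := ℂ)
          (NormedSpace.exp (((x - y : ℝ) : ℂ) • B) * Emat y)‖ * ‖V y‖ :=
        ContinuousLinearMap.le_opNorm _ _
      _ = ‖NormedSpace.exp (((x - y : ℝ) : ℂ) • B) * Emat y‖ * ‖V y‖ := rfl
      _ ≤ (‖NormedSpace.exp (((x - y : ℝ) : ℂ) • B)‖ * ‖Emat y‖) * ‖V y‖ :=
        mul_le_mul_of_nonneg_right (norm_mul_le _ _) (norm_nonneg _)
      _ ≤ (C₁ * (C₂ * Real.exp (η * y))) * C := by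
        refine mul_le_mul (mul_le_mul (hB _ h0) (hEbnd y hyM) (norm_nonneg _) hC₁.le)
          (hC y hyM) (norm_nonneg _) ?_
        positivity
      _ = (C₁ * C₂ * C) * Real.exp (η * y) := by ring
  have hgint : IntegrableOn g (Iic x) := by
    refine Integrable.mono' ((hexpint.const_mul (C₁ * C₂ * C)))
      (hgcont.aestronglyMeasurable measurableSet_Iic) ?_
    filter_upwards [ae_restrict_mem measurableSet_Iic] with y hy
    exact hgbnd y hy
  -- limit of W at -∞
  have hWlim : Tendsto (fun y => (A y) (V y)) atBot (𝓝 Vm) := by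
    have hnorm : Tendsto (fun y => ‖V y - Vm‖) atBot (𝓝 0) := by
      have := hVlim.sub (tendsto_const_nhds (x := Vm))
      simpa using this.norm
    have hbnd2 : ∀ᶠ y in atBot, ‖(A y) (V y) - Vm‖ ≤ C₁ * ‖V y - Vm‖ := by
      filter_upwards [Iic_mem_atBot x] with y hy
      have heq : (A y) (V y) - Vm = (A y) (V y - Vm) := by
        rw [map_sub]
        congr 1
        exact (hexpVm _).symm
      rw [heq]
      calc ‖(A y) (V y - Vm)‖ ≤ ‖A y‖ * ‖V y - Vm‖ := ContinuousLinearMap.le_opNorm _ _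
        _ ≤ C₁ * ‖V y - Vm‖ :=
          mul_le_mul_of_nonneg_right (hAnorm y hy) (norm_nonneg _)
    have key : Tendsto (fun y => (A y) (V y) - Vm) atBot (𝓝 0) :=
      squeeze_zero_norm' hbnd2 (by simpa using hnorm.const_mul C₁)
    have := key.add (tendsto_const_nhds (x := Vm))
    simpa using this
  -- FTC
  have hftc : ∫ y in Iic x, g y = (A x) (V x) - Vm := by
    refine integral_Iic_of_hasDerivAt_of_tendsto ?_ ?_ hgint hWlim
    · exact ((hW x hx).continuousWithinAt).mono (Iic_subset_Iic.2 hx)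
    · intro y hy
      have hyM : y < M := lt_of_lt_of_le hy.out hx
      exact (hW y hyM.le).hasDerivAt (Iic_mem_nhds hyM)
  have hAx : (A x) (V x) = V x := by
    have : A x = 1 := by
      show NormedSpace.exp (((x - x : ℝ) : ℂ) • b) = 1
      have h0 : ((x - x : ℝ) : ℂ) • b = 0 := by
        have : ((x - x : ℝ) : ℂ) = 0 := by norm_num
        rw [this]
        exact zero_smul ℂ b
      rw [h0, NormedSpace.exp_zero]
    rw [this, ContinuousLinearMap.one_apply]
  rw [show (∫ y in Set.Iic x,
      (Matrix.toEuclideanCLM (𝕜 := ℂ)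
        (NormedSpace.exp (((x - y : ℝ) : ℂ) • B) * Emat y)) (V y)) = ∫ y in Iic x, g y from rfl,
    hftc, hAx]
  abel
end
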